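/- arXiv:2410.00611 — 4 statements merged into one kernel-verified Lean document; each statement's English description precedes it below -/
import Mathlib

section
/- Let n be an even positive integer and F : 𝔽_2^n → 𝔽_2^n a plateaued APN function. Then (2^{n+1} − 2)/3 ≤ Nb_F ≤ 2^{n+1} − 2. The lower bound holds with equality if and only if exactly 2(2^n − 1)/3 of the nonzero components of F are bent and exactly (2^n − 1)/3 of them are balanced. The upper bound holds with equality if and only if no nonzero component of F is balanced (i.e., W_F(b,0) ≠ 0 for all b ≠ 0). -/
open Finset

/-- The integer-valued Walsh transform of `F : 𝔽_2^n → 𝔽_2^n`: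
`W_F(b,a) = ∑_x (-1)^{⟨b,F(x)⟩ + ⟨a,x⟩}`. -/
def walshB (n : ℕ) (F : (Fin n → ZMod 2) → (Fin n → ZMod 2))
    (b a : Fin n → ZMod 2) : ℤ :=
  ∑ x : Fin n → ZMod 2, (-1 : ℤ) ^ ((∑ i, b i * F x i).val + (∑ i, a i * x i).val)

/-- The imbalance `Nb_F = 2^{-n} ∑_{b ≠ 0} W_F(b,0)²`. -/
noncomputable def NbB (n : ℕ) (F : (Fin n → ZMod 2) → (Fin n → ZMod 2)) : ℝ :=
  ((2 : ℝ) ^ n)⁻¹ *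
    ∑ b ∈ univ.filter (fun b : Fin n → ZMod 2 => b ≠ 0), ((walshB n F b 0 : ℝ)) ^ 2

/-- `F` is APN: for every `a ≠ 0` and every `b`, the equation `F(x+a) + F(x) = b` has at
most 2 solutions. -/
def IsAPNB (n : ℕ) (F : (Fin n → ZMod 2) → (Fin n → ZMod 2)) : Prop :=
  ∀ a : Fin n → ZMod 2, a ≠ 0 → ∀ b : Fin n → ZMod 2,
    (univ.filter fun x => F (x + a) + F x = b).card ≤ 2

/-- The component `F_b` is `t`-plateaued: `|W_F(b,a)| ∈ {0, 2^{(n+t)/2}}` for all `a`,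
expressed via squares of the integer Walsh coefficients. -/
def IsTPlateauedB (n : ℕ) (F : (Fin n → ZMod 2) → (Fin n → ZMod 2))
    (b : Fin n → ZMod 2) (t : ℕ) : Prop :=
  ∀ a : Fin n → ZMod 2, walshB n F b a = 0 ∨ (walshB n F b a) ^ 2 = 2 ^ (n + t)

/-- `F` is plateaued: every nonzero component is `t_b`-plateaued for some `t_b`. -/
def IsPlateauedB (n : ℕ) (F : (Fin n → ZMod 2) → (Fin n → ZMod 2)) : Prop :=
  ∀ b : Fin n → ZMod 2, b ≠ 0 → ∃ t : ℕ, IsTPlateauedB n F b t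

/-- The component `F_b` is bent: `|W_F(b,a)| = 2^{n/2}` for all `a`, i.e.
`W_F(b,a)² = 2^n`. -/
def IsBentB (n : ℕ) (F : (Fin n → ZMod 2) → (Fin n → ZMod 2))
    (b : Fin n → ZMod 2) : Prop :=
  ∀ a : Fin n → ZMod 2, (walshB n F b a) ^ 2 = 2 ^ n

instance (n : ℕ) (F : (Fin n → ZMod 2) → (Fin n → ZMod 2)) (b : Fin n → ZMod 2) :
    Decidable (IsBentB n F b) := by
  unfold IsBentB; infer_instance

namespace PAB

def dotv {n : ℕ} (a x : Fin n → ZMod 2) : ZMod 2 := ∑ i, a i * x i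

def ee (c : ZMod 2) : ℤ := (-1) ^ c.val

lemma ee_add (c d : ZMod 2) : ee (c + d) = ee c * ee d := by revert c d; decide

lemma ee_zero : ee 0 = 1 := rfl

lemma ee_sq (c : ZMod 2) : ee c * ee c = 1 := by revert c; decide

lemma ee_sum {ι : Type*} (s : Finset ι) (f : ι → ZMod 2) :
    ee (∑ i ∈ s, f i) = ∏ i ∈ s, ee (f i) := by
  classical
  induction s using Finset.cons_induction with
  | empty => simp [ee_zero]
  | cons a s ha ih => rw [Finset.sum_cons, Finset.prod_cons, ee_add, ih]

lemma dotv_add_right {n : ℕ} (a x y : Fin n → ZMod 2) :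
    dotv a (x + y) = dotv a x + dotv a y := by
  simp [dotv, mul_add, Finset.sum_add_distrib]

lemma dotv_zero_left {n : ℕ} (x : Fin n → ZMod 2) : dotv 0 x = 0 := by
  simp [dotv]

lemma walshB_eq {n : ℕ} (F : (Fin n → ZMod 2) → (Fin n → ZMod 2)) (b a : Fin n → ZMod 2) :
    walshB n F b a = ∑ x : Fin n → ZMod 2, ee (dotv b (F x)) * ee (dotv a x) := by
  unfold walshB ee dotv
  exact Finset.sum_congr rfl fun x _ => pow_add _ _ _

lemma char_sum {n : ℕ} (y : Fin n → ZMod 2) :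
    ∑ a : Fin n → ZMod 2, ee (dotv a y) = if y = 0 then (2 : ℤ) ^ n else 0 := by
  have h1 : ∀ a : Fin n → ZMod 2, ee (dotv a y) = ∏ i, ee (a i * y i) := by
    intro a; rw [dotv, ee_sum]
  calc ∑ a : Fin n → ZMod 2, ee (dotv a y)
      = ∑ a : Fin n → ZMod 2, ∏ i, ee (a i * y i) := Finset.sum_congr rfl fun a _ => h1 a
    _ = ∏ i, ∑ c : ZMod 2, ee (c * y i) := (Fintype.prod_sum fun i c => ee (c * y i)).symm
    _ = ∏ i, (if y i = 0 then (2:ℤ) else 0) := by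
        refine Finset.prod_congr rfl fun i _ => ?_
        have : ∀ d : ZMod 2, (∑ c : ZMod 2, ee (c * d)) = if d = 0 then (2:ℤ) else 0 := by
          decide
        exact this (y i)
    _ = if y = 0 then (2 : ℤ) ^ n else 0 := by
        by_cases hy : y = 0
        · simp [hy]
        · obtain ⟨j, hj⟩ : ∃ j, y j ≠ 0 := by
            by_contra h; push_neg at h; exact hy (funext h)
          rw [if_neg hy]
          exact Finset.prod_eq_zero (Finset.mem_univ j) (by simp [hj])

lemma add_self_v {n : ℕ} (x : Fin n → ZMod 2) : x + x = 0 := by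
  funext i
  have : ∀ c : ZMod 2, c + c = 0 := by decide
  exact this (x i)

end PAB
namespace PAB2
open PAB

variable {n : ℕ} (F : (Fin n → ZMod 2) → (Fin n → ZMod 2))

lemma dotv_sum {n : ℕ} {ι : Type*} (a : Fin n → ZMod 2) (s : Finset ι)
    (p : ι → Fin n → ZMod 2) :
    dotv a (∑ i ∈ s, p i) = ∑ i ∈ s, dotv a (p i) := by
  unfold dotv
  rw [Finset.sum_comm]
  exact Finset.sum_congr rfl fun j _ => by
    rw [Finset.sum_apply, Finset.mul_sum]

lemma sum_walsh_pow (b : Fin n → ZMod 2) (k : ℕ) :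
    ∑ a : Fin n → ZMod 2, (walshB n F b a) ^ k
      = 2 ^ n * ∑ p ∈ Finset.univ.filter
          (fun p : Fin k → (Fin n → ZMod 2) => ∑ i, p i = 0),
          ∏ i, ee (dotv b (F (p i))) := by
  classical
  have h1 : ∀ a, (walshB n F b a) ^ k
      = ∑ p : Fin k → (Fin n → ZMod 2),
          (∏ i, ee (dotv b (F (p i)))) * ∏ i, ee (dotv a (p i)) := by
    intro a
    rw [walshB_eq, Fintype.sum_pow]
    exact Finset.sum_congr rfl fun p _ => by rw [← Finset.prod_mul_distrib]
  calc ∑ a : Fin n → ZMod 2, (walshB n F b a) ^ k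
      = ∑ a : Fin n → ZMod 2, ∑ p : Fin k → (Fin n → ZMod 2),
          (∏ i, ee (dotv b (F (p i)))) * ∏ i, ee (dotv a (p i)) :=
        Finset.sum_congr rfl fun a _ => h1 a
    _ = ∑ p : Fin k → (Fin n → ZMod 2),
          (∏ i, ee (dotv b (F (p i)))) * ∑ a : Fin n → ZMod 2, ∏ i, ee (dotv a (p i)) := by
        rw [Finset.sum_comm]
        exact Finset.sum_congr rfl fun p _ => by rw [Finset.mul_sum]
    _ = ∑ p : Fin k → (Fin n → ZMod 2),
          (∏ i, ee (dotv b (F (p i)))) * (if (∑ i, p i) = 0 then (2:ℤ)^n else 0) := by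
        refine Finset.sum_congr rfl fun p _ => ?_
        congr 1
        rw [← char_sum (∑ i, p i)]
        exact Finset.sum_congr rfl fun a _ => by
          rw [dotv_sum, ee_sum]
    _ = ∑ p : Fin k → (Fin n → ZMod 2),
          (if (∑ i, p i) = 0 then (2:ℤ)^n * ∏ i, ee (dotv b (F (p i))) else 0) := by
        refine Finset.sum_congr rfl fun p _ => ?_
        by_cases h : (∑ i, p i) = 0 <;> simp [h, mul_comm]
    _ = 2 ^ n * ∑ p ∈ Finset.univ.filter
          (fun p : Fin k → (Fin n → ZMod 2) => ∑ i, p i = 0),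
          ∏ i, ee (dotv b (F (p i))) := by
        rw [← Finset.sum_filter, Finset.mul_sum]

lemma card_univ_V : (Finset.univ : Finset (Fin n → ZMod 2)).card = 2 ^ n := by
  simp [Finset.card_univ]

lemma parseval (b : Fin n → ZMod 2) :
    ∑ a : Fin n → ZMod 2, (walshB n F b a) ^ 2 = 2 ^ (2 * n) := by
  classical
  rw [sum_walsh_pow]
  have h2 : ∀ p ∈ Finset.univ.filter
      (fun p : Fin 2 → (Fin n → ZMod 2) => ∑ i, p i = 0),
      (∏ i, ee (dotv b (F (p i)))) = 1 := by
    intro p hp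
    simp only [Finset.mem_filter, Fin.sum_univ_two] at hp
    have hp1 : p 1 = p 0 := by
      have := hp.2
      have h0 := add_self_v (p 0)
      -- p 0 + p 1 = 0 and p 0 + p 0 = 0 ⇒ p 1 = p 0
      have : p 0 + p 1 = p 0 + p 0 := by rw [this, h0]
      exact add_left_cancel this
    rw [Fin.prod_univ_two, hp1, ee_sq]
  rw [Finset.sum_congr rfl h2, Finset.sum_const, nsmul_eq_mul, mul_one]
  have hcard : (Finset.univ.filter
      (fun p : Fin 2 → (Fin n → ZMod 2) => ∑ i, p i = 0)).card = 2 ^ n := by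
    rw [← card_univ_V (n := n)]
    apply Finset.card_nbij' (fun p => p 0) (fun x => ![x, x])
    · intro p hp; exact Finset.mem_univ _
    · intro x hx
      simp only [Finset.mem_filter, Finset.mem_univ, true_and, Fin.sum_univ_two]
      simp [add_self_v]
    · intro p hp
      simp only [Finset.mem_coe, Finset.mem_filter, Finset.mem_univ, true_and, Fin.sum_univ_two] at hp
      have hp1 : p 1 = p 0 := by
        have : p 0 + p 1 = p 0 + p 0 := by rw [hp, add_self_v]
        exact add_left_cancel this
      funext i
      fin_cases i <;> simp [hp1]
    · intro x hx; simp
  rw [hcard]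
  push_cast
  ring

end PAB2
namespace PAB3
open PAB PAB2

variable {n : ℕ} (F : (Fin n → ZMod 2) → (Fin n → ZMod 2))

lemma add_eq_zero_iff_v {x y : Fin n → ZMod 2} : x + y = 0 ↔ x = y := by
  constructor
  · intro h
    have h2 : x + y + y = y := by rw [h, zero_add]
    rwa [add_assoc, add_self_v y, add_zero] at h2
  · intro h; rw [h, add_self_v]

/-- total fourth moment -/
lemma total_fourth :
    ∑ b : Fin n → ZMod 2, ∑ a : Fin n → ZMod 2, (walshB n F b a) ^ 4
      = 2 ^ (2 * n) * ((Finset.univ.filter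
          (fun p : Fin 4 → (Fin n → ZMod 2) =>
            (∑ i, p i = 0) ∧ (∑ i, F (p i) = 0))).card : ℤ) := by
  classical
  have step1 : ∀ b, ∑ a : Fin n → ZMod 2, (walshB n F b a) ^ 4
      = 2 ^ n * ∑ p ∈ Finset.univ.filter
          (fun p : Fin 4 → (Fin n → ZMod 2) => ∑ i, p i = 0),
          ee (dotv b (∑ i, F (p i))) := by
    intro b
    rw [sum_walsh_pow]
    congr 1
    exact Finset.sum_congr rfl fun p _ => by rw [dotv_sum, ee_sum]
  calc ∑ b : Fin n → ZMod 2, ∑ a : Fin n → ZMod 2, (walshB n F b a) ^ 4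
      = ∑ b : Fin n → ZMod 2, 2 ^ n * ∑ p ∈ Finset.univ.filter
          (fun p : Fin 4 → (Fin n → ZMod 2) => ∑ i, p i = 0),
          ee (dotv b (∑ i, F (p i))) := Finset.sum_congr rfl fun b _ => step1 b
    _ = 2 ^ n * ∑ p ∈ Finset.univ.filter
          (fun p : Fin 4 → (Fin n → ZMod 2) => ∑ i, p i = 0),
          ∑ b : Fin n → ZMod 2, ee (dotv b (∑ i, F (p i))) := by
        rw [← Finset.mul_sum, Finset.sum_comm]
    _ = 2 ^ n * ∑ p ∈ Finset.univ.filter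
          (fun p : Fin 4 → (Fin n → ZMod 2) => ∑ i, p i = 0),
          (if (∑ i, F (p i)) = 0 then (2:ℤ)^n else 0) := by
        congr 1
        exact Finset.sum_congr rfl fun p _ => char_sum _
    _ = 2 ^ (2 * n) * ((Finset.univ.filter
          (fun p : Fin 4 → (Fin n → ZMod 2) =>
            (∑ i, p i = 0) ∧ (∑ i, F (p i) = 0))).card : ℤ) := by
        rw [← Finset.sum_filter, Finset.filter_filter, Finset.sum_const,
          nsmul_eq_mul, two_mul, pow_add]
        ring
end PAB3
namespace PAB4
open PAB PAB2 PAB3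

variable {n : ℕ} {F : (Fin n → ZMod 2) → (Fin n → ZMod 2)}

/-- the derivative -/
def Dv (F : (Fin n → ZMod 2) → (Fin n → ZMod 2)) (a x : Fin n → ZMod 2) :
    Fin n → ZMod 2 := F (x + a) + F x

lemma Ra_zero_card :
    (Finset.univ.filter (fun xz : (Fin n → ZMod 2) × (Fin n → ZMod 2) =>
      Dv F 0 xz.1 = Dv F 0 xz.2)).card = 2 ^ n * 2 ^ n := by
  classical
  have h : ∀ x : Fin n → ZMod 2, Dv F 0 x = 0 := by
    intro x; unfold Dv; rw [add_zero, add_self_v]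
  rw [Finset.filter_true_of_mem (fun xz _ => by rw [h, h])]
  rw [Finset.card_univ, Fintype.card_prod]
  simp [Fintype.card_fun]

lemma Ra_card (hapn : IsAPNB n F) {a : Fin n → ZMod 2} (ha : a ≠ 0) :
    (Finset.univ.filter (fun xz : (Fin n → ZMod 2) × (Fin n → ZMod 2) =>
      Dv F a xz.1 = Dv F a xz.2)).card = 2 ^ (n + 1) := by
  classical
  set Ca : (Fin n → ZMod 2) → Finset (Fin n → ZMod 2) :=
    fun c => Finset.univ.filter (fun x => Dv F a x = c) with hCa
  have hle : ∀ c, (Ca c).card ≤ 2 := fun c => hapn a ha c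
  have hne1 : ∀ c, (Ca c).card ≠ 1 := by
    intro c h1
    obtain ⟨x, hx⟩ := Finset.card_eq_one.mp h1
    have hxm : x ∈ Ca c := by rw [hx]; exact Finset.mem_singleton_self x
    have hxa : x + a ∈ Ca c := by
      simp only [hCa, Finset.mem_filter, Finset.mem_univ, true_and] at hxm ⊢
      unfold Dv at hxm ⊢
      rw [add_assoc, add_self_v, add_zero, add_comm]
      exact hxm
    rw [hx, Finset.mem_singleton] at hxa hxm
    have : a = 0 := by
      have h2 : x + a = x + 0 := by rw [add_zero, hxa]
      exact add_left_cancel h2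
    exact ha this
  have hsq : ∀ c, (Ca c).card * (Ca c).card = 2 * (Ca c).card := by
    intro c
    have := hle c; have := hne1 c
    interval_cases h : (Ca c).card <;> omega
  -- fiberwise decomposition
  have hfib : (Finset.univ.filter (fun xz : (Fin n → ZMod 2) × (Fin n → ZMod 2) =>
      Dv F a xz.1 = Dv F a xz.2)).card
      = ∑ c : Fin n → ZMod 2, (Ca c).card * (Ca c).card := by
    rw [Finset.card_eq_sum_card_fiberwise
      (f := fun xz : (Fin n → ZMod 2) × (Fin n → ZMod 2) => Dv F a xz.1)
      (t := Finset.univ) (fun _ _ => Finset.mem_univ _)]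
    refine Finset.sum_congr rfl fun c _ => ?_
    have : (Finset.univ.filter (fun xz : (Fin n → ZMod 2) × (Fin n → ZMod 2) =>
        Dv F a xz.1 = Dv F a xz.2)).filter (fun xz => Dv F a xz.1 = c)
        = (Ca c) ×ˢ (Ca c) := by
      ext ⟨x, z⟩
      simp only [Finset.mem_filter, Finset.mem_univ, true_and, Finset.mem_product, hCa]
      constructor
      · rintro ⟨h1, h2⟩; exact ⟨h2, h1.symm.trans h2⟩
      · rintro ⟨h1, h2⟩; exact ⟨h1.trans h2.symm, h1⟩
    rw [this, Finset.card_product]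
  have hsum : ∑ c : Fin n → ZMod 2, (Ca c).card = 2 ^ n := by
    rw [← card_univ_V (n := n),
      Finset.card_eq_sum_card_fiberwise (f := fun x => Dv F a x)
        (t := Finset.univ) (fun _ _ => Finset.mem_univ _)]
  rw [hfib, Finset.sum_congr rfl fun c _ => hsq c, ← Finset.mul_sum, hsum, pow_succ]
  ring

lemma quad_card (hapn : IsAPNB n F) :
    ((Finset.univ.filter
        (fun p : Fin 4 → (Fin n → ZMod 2) =>
          (∑ i, p i = 0) ∧ (∑ i, F (p i) = 0))).card : ℤ)
      = 3 * 2 ^ (2 * n) - 2 ^ (n + 1) := by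
  classical
  have hz2 : ∀ u v w : ZMod 2, u + (u + v) + w + (w + v) = 0 := by decide
  have hz4 : ∀ p q r s : ZMod 2, q + p = s + r → p + q + r + s = 0 := by decide
  have hz4' : ∀ p q r s : ZMod 2, p + q + r + s = 0 → q + p = s + r := by decide
  -- fiberwise over a = p 0 + p 1
  have hfib : (Finset.univ.filter
        (fun p : Fin 4 → (Fin n → ZMod 2) =>
          (∑ i, p i = 0) ∧ (∑ i, F (p i) = 0))).card
      = ∑ a : Fin n → ZMod 2,
          (Finset.univ.filter (fun xz : (Fin n → ZMod 2) × (Fin n → ZMod 2) =>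
            Dv F a xz.1 = Dv F a xz.2)).card := by
    rw [Finset.card_eq_sum_card_fiberwise
      (f := fun p : Fin 4 → (Fin n → ZMod 2) => p 0 + p 1)
      (t := Finset.univ) (fun _ _ => Finset.mem_univ _)]
    refine Finset.sum_congr rfl fun a _ => ?_
    apply Finset.card_nbij' (fun p => (p 0, p 2))
      (fun xz => ![xz.1, xz.1 + a, xz.2, xz.2 + a])
    · -- forward membership
      intro p hp
      simp only [Finset.mem_coe, Finset.mem_filter, Finset.mem_univ, true_and,
        Fin.sum_univ_four] at hp
      obtain ⟨⟨hp0, hpF⟩, hpa⟩ := hp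
      have hp1 : p 1 = p 0 + a := by
        rw [← hpa, ← add_assoc, add_self_v, zero_add]
      have hp3 : p 3 = p 2 + a := by
        have h3 := add_eq_zero_iff_v.mp hp0
        rw [← h3, hpa, add_comm]
      simp only [Finset.mem_coe, Finset.mem_filter, Finset.mem_univ, true_and]
      unfold Dv
      rw [hp1, hp3] at hpF
      funext i
      have hi := congrFun hpF i
      simp only [Pi.add_apply, Pi.zero_apply] at hi ⊢
      exact hz4' _ _ _ _ hi
    · -- backward membership
      intro xz hxz
      simp only [Finset.mem_coe, Finset.mem_filter, Finset.mem_univ, true_and] at hxz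
      simp only [Finset.mem_coe, Finset.mem_filter, Finset.mem_univ, true_and, Fin.sum_univ_four,
        Matrix.cons_val_zero, Matrix.cons_val_one, Matrix.head_cons,
        Matrix.cons_val_two, Matrix.tail_cons, Matrix.cons_val_three]
      refine ⟨⟨?_, ?_⟩, ?_⟩
      · funext i
        simp only [Pi.add_apply, Pi.zero_apply]
        exact hz2 (xz.1 i) (a i) (xz.2 i)
      · unfold Dv at hxz
        funext i
        have hi := congrFun hxz i
        simp only [Pi.add_apply, Pi.zero_apply] at hi ⊢
        exact hz4 _ _ _ _ hi
      · rw [← add_assoc, add_self_v, zero_add]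
    · -- left inverse
      intro p hp
      simp only [Finset.mem_coe, Finset.mem_filter, Finset.mem_univ, true_and,
        Fin.sum_univ_four] at hp
      obtain ⟨⟨hp0, _⟩, hpa⟩ := hp
      have hp1 : p 1 = p 0 + a := by
        rw [← hpa, ← add_assoc, add_self_v, zero_add]
      have hp3 : p 3 = p 2 + a := by
        have h3 := add_eq_zero_iff_v.mp hp0
        rw [← h3, hpa, add_comm]
      funext i
      fin_cases i <;> simp [hp1, hp3]
    · intro xz hxz; simp
  rw [hfib, ← Finset.add_sum_erase _ _ (Finset.mem_univ (0 : Fin n → ZMod 2))]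
  rw [Ra_zero_card]
  have herase : ∀ a ∈ Finset.univ.erase (0 : Fin n → ZMod 2),
      (Finset.univ.filter (fun xz : (Fin n → ZMod 2) × (Fin n → ZMod 2) =>
        Dv F a xz.1 = Dv F a xz.2)).card = 2 ^ (n + 1) := by
    intro a ha
    exact Ra_card hapn (Finset.mem_erase.mp ha).1
  rw [Finset.sum_congr rfl herase, Finset.sum_const, Finset.card_erase_of_mem
    (Finset.mem_univ _), card_univ_V, smul_eq_mul]
  have h1 : (1 : ℕ) ≤ 2 ^ n := Nat.one_le_two_pow
  push_cast [h1]
  rw [two_mul, pow_add, pow_succ]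
  ring

end PAB4
namespace PAB5
open PAB PAB2 PAB3 PAB4

variable {n : ℕ} {F : (Fin n → ZMod 2) → (Fin n → ZMod 2)}

lemma fourth_of_plateaued {b : Fin n → ZMod 2} {t : ℕ}
    (hb : IsTPlateauedB n F b t) :
    ∑ a : Fin n → ZMod 2, (walshB n F b a) ^ 4 = 2 ^ (n + t) * 2 ^ (2 * n) := by
  have h : ∀ a, (walshB n F b a) ^ 4 = 2 ^ (n + t) * (walshB n F b a) ^ 2 := by
    intro a
    rcases hb a with h0 | h2
    · rw [h0]; ring
    · rw [show (4 : ℕ) = 2 * 2 from rfl, pow_mul, h2, ← h2]; ring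
  rw [Finset.sum_congr rfl fun a _ => h a, ← Finset.mul_sum, parseval]

lemma exists_nonzero_walsh (F : (Fin n → ZMod 2) → (Fin n → ZMod 2))
    (b : Fin n → ZMod 2) : ∃ a, walshB n F b a ≠ 0 := by
  by_contra h
  push_neg at h
  have := parseval F b
  rw [Finset.sum_congr rfl fun a _ => by rw [h a]] at this
  simp at this
  exact pow_ne_zero (2 * n) (two_ne_zero) this.symm

lemma sq_eq_two_pow_even {k : ℤ} {m : ℕ} (h : k ^ 2 = 2 ^ m) : Even m := by
  have hk : k.natAbs ^ 2 = 2 ^ m := by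
    have := congrArg Int.natAbs h
    rwa [Int.natAbs_pow, Int.natAbs_pow, show (2:ℤ).natAbs = 2 from rfl] at this
  have hdvd : k.natAbs ∣ 2 ^ m := ⟨k.natAbs, by rw [← hk]; ring⟩
  obtain ⟨j, hj, hkj⟩ := (Nat.dvd_prime_pow Nat.prime_two).mp hdvd
  rw [hkj, ← pow_mul] at hk
  have := Nat.pow_right_injective (le_refl 2) hk
  exact ⟨j, by omega⟩

lemma pow_eq_int {s u : ℕ} (h : (2 : ℤ) ^ s = 2 ^ u) : s = u := by
  have : ((2 ^ s : ℕ) : ℤ) = ((2 ^ u : ℕ) : ℤ) := by push_cast; exact h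
  exact Nat.pow_right_injective (le_refl 2) (Nat.cast_injective.eq_iff.mp this)

lemma bent_iff_t_zero {b : Fin n → ZMod 2} {t : ℕ}
    (hb : IsTPlateauedB n F b t) : IsBentB n F b ↔ t = 0 := by
  constructor
  · intro hbent
    obtain ⟨a, ha⟩ := exists_nonzero_walsh F b
    rcases hb a with h0 | h2
    · exact absurd h0 ha
    · have := (hbent a).symm.trans h2
      have hnn := pow_eq_int this
      omega
  · intro ht0
    subst ht0
    intro a
    have key : ∑ a : Fin n → ZMod 2, ((2:ℤ) ^ n - (walshB n F b a) ^ 2) = 0 := by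
      rw [Finset.sum_sub_distrib, Finset.sum_const, card_univ_V, parseval,
        nsmul_eq_mul, two_mul, pow_add]
      push_cast
      ring
    have hnn : ∀ a ∈ (Finset.univ : Finset (Fin n → ZMod 2)),
        (0:ℤ) ≤ 2 ^ n - (walshB n F b a) ^ 2 := by
      intro a _
      rcases hb a with h0 | h2
      · rw [h0]
        norm_num
      · rw [h2, add_zero, sub_self]
    have := (Finset.sum_eq_zero_iff_of_nonneg hnn).mp key a (Finset.mem_univ a)
    linarith

lemma walsh_zero_left (F : (Fin n → ZMod 2) → (Fin n → ZMod 2))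
    (a : Fin n → ZMod 2) :
    walshB n F 0 a = if a = 0 then (2:ℤ) ^ n else 0 := by
  rw [walshB_eq, ← char_sum a]
  refine Finset.sum_congr rfl fun x _ => ?_
  rw [dotv_zero_left, ee_zero, one_mul]
  congr 1
  unfold dotv
  exact Finset.sum_congr rfl fun i _ => mul_comm _ _

/-- The key identity: sum of `2^{t_b}` over nonzero `b` equals `2^{n+1} - 2`. -/
lemma sum_two_pow_t (hapn : IsAPNB n F) (t : (Fin n → ZMod 2) → ℕ)
    (ht : ∀ b : Fin n → ZMod 2, b ≠ 0 → IsTPlateauedB n F b (t b)) :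
    ∑ b ∈ Finset.univ.filter (fun b : Fin n → ZMod 2 => b ≠ 0), (2:ℤ) ^ (t b)
      = 2 ^ (n + 1) - 2 := by
  classical
  have htot := (total_fourth F).trans (by rw [quad_card hapn])
  have hzero : ∑ a : Fin n → ZMod 2, (walshB n F 0 a) ^ 4 = 2 ^ (4 * n) := by
    rw [Finset.sum_congr rfl fun a _ => by rw [walsh_zero_left F a]]
    have h4 : ∀ a : Fin n → ZMod 2,
        (if a = 0 then (2:ℤ) ^ n else 0) ^ 4 = if a = 0 then (2:ℤ)^(4*n) else 0 := by
      intro a; split <;> [rw [← pow_mul, mul_comm]; ring]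
    rw [Finset.sum_congr rfl fun a _ => h4 a, Finset.sum_ite_eq' Finset.univ,
      if_pos (Finset.mem_univ _)]
  have hsplit : ∑ b : Fin n → ZMod 2, ∑ a : Fin n → ZMod 2, (walshB n F b a) ^ 4
      = 2 ^ (4 * n) + ∑ b ∈ Finset.univ.filter (fun b : Fin n → ZMod 2 => b ≠ 0),
          ∑ a : Fin n → ZMod 2, (walshB n F b a) ^ 4 := by
    rw [Finset.filter_ne', ← Finset.add_sum_erase _ _
      (Finset.mem_univ (0 : Fin n → ZMod 2)), hzero]
  have hplatsum : ∑ b ∈ Finset.univ.filter (fun b : Fin n → ZMod 2 => b ≠ 0),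
      ∑ a : Fin n → ZMod 2, (walshB n F b a) ^ 4
      = ∑ b ∈ Finset.univ.filter (fun b : Fin n → ZMod 2 => b ≠ 0),
          2 ^ (n + t b) * 2 ^ (2 * n) := by
    refine Finset.sum_congr rfl fun b hb => ?_
    exact fourth_of_plateaued (ht b (Finset.mem_filter.mp hb).2)
  have e1 : (2:ℤ) ^ (4 * n) + ∑ b ∈ Finset.univ.filter
      (fun b : Fin n → ZMod 2 => b ≠ 0), 2 ^ (n + t b) * 2 ^ (2 * n)
      = 2 ^ (2 * n) * (3 * 2 ^ (2 * n) - 2 ^ (n + 1)) := by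
    rw [← hplatsum, ← hsplit]; exact htot
  have hne : ((2:ℤ) ^ (3 * n)) ≠ 0 := by positivity
  apply mul_right_cancel₀ hne
  rw [Finset.sum_mul]
  have hterm : ∀ b : Fin n → ZMod 2,
      (2:ℤ) ^ (t b) * 2 ^ (3 * n) = 2 ^ (n + t b) * 2 ^ (2 * n) := by
    intro b; rw [← pow_add, ← pow_add]; congr 1; ring
  have hsc : ∑ b ∈ Finset.univ.filter (fun b : Fin n → ZMod 2 => b ≠ 0),
      (2:ℤ) ^ (t b) * 2 ^ (3 * n)
      = ∑ b ∈ Finset.univ.filter (fun b : Fin n → ZMod 2 => b ≠ 0),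
        2 ^ (n + t b) * 2 ^ (2 * n) := Finset.sum_congr rfl fun b _ => hterm b
  rw [hsc]
  linear_combination e1

end PAB5
set_option maxHeartbeats 1000000 in
open PAB PAB2 PAB3 PAB4 PAB5 in
theorem plateaued_apn_imbalance_bounds (n : ℕ) (hn : 0 < n) (hne : Even n)
    (F : (Fin n → ZMod 2) → (Fin n → ZMod 2))
    (hplat : IsPlateauedB n F) (hapn : IsAPNB n F) :
    (((2 : ℝ) ^ (n + 1) - 2) / 3 ≤ NbB n F ∧ NbB n F ≤ (2 : ℝ) ^ (n + 1) - 2) ∧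
    (NbB n F = ((2 : ℝ) ^ (n + 1) - 2) / 3 ↔
      (univ.filter fun b : Fin n → ZMod 2 => b ≠ 0 ∧ IsBentB n F b).card
          = 2 * (2 ^ n - 1) / 3 ∧
      (univ.filter fun b : Fin n → ZMod 2 => b ≠ 0 ∧ walshB n F b 0 = 0).card
          = (2 ^ n - 1) / 3) ∧
    (NbB n F = (2 : ℝ) ^ (n + 1) - 2 ↔
      ∀ b : Fin n → ZMod 2, b ≠ 0 → walshB n F b 0 ≠ 0) := by
  have hex : ∀ b : Fin n → ZMod 2, ∃ t : ℕ, b ≠ 0 → IsTPlateauedB n F b t := by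
    intro b
    by_cases hb : b = 0
    · exact ⟨0, fun h => absurd hb h⟩
    · obtain ⟨t, ht⟩ := hplat b hb
      exact ⟨t, fun _ => ht⟩
  choose t ht using hex
  set S : Finset (Fin n → ZMod 2) :=
    Finset.univ.filter (fun b : Fin n → ZMod 2 => b ≠ 0) with hSdef
  set Bent : Finset (Fin n → ZMod 2) :=
    Finset.univ.filter (fun b : Fin n → ZMod 2 => b ≠ 0 ∧ IsBentB n F b) with hBentdef
  set Bal : Finset (Fin n → ZMod 2) :=
    Finset.univ.filter (fun b : Fin n → ZMod 2 => b ≠ 0 ∧ walshB n F b 0 = 0) with hBaldef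
  have hmemS : ∀ b ∈ S, b ≠ 0 := fun b hb => (Finset.mem_filter.mp hb).2
  have hmemBent : ∀ b, b ∈ Bent ↔ b ≠ 0 ∧ IsBentB n F b := by
    intro b; rw [hBentdef, Finset.mem_filter]; simp
  have hmemBal : ∀ b, b ∈ Bal ↔ b ≠ 0 ∧ walshB n F b 0 = 0 := by
    intro b; rw [hBaldef, Finset.mem_filter]; simp
  have hmemS' : ∀ b, b ∈ S ↔ b ≠ 0 := by
    intro b; rw [hSdef, Finset.mem_filter]; simp
  have hsumt : ∑ b ∈ S, (2:ℤ) ^ (t b) = 2 ^ (n + 1) - 2 := sum_two_pow_t hapn t ht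
  have hBentsub : Bent ⊆ S := fun b hb =>
    (hmemS' b).mpr ((hmemBent b).mp hb).1
  have hBalsub : Bal ⊆ S := fun b hb =>
    (hmemS' b).mpr ((hmemBal b).mp hb).1
  have hdisj : Disjoint Bent Bal := by
    rw [Finset.disjoint_left]
    intro b hb hb'
    obtain ⟨hb0, hbent⟩ := (hmemBent b).mp hb
    obtain ⟨_, hbal⟩ := (hmemBal b).mp hb'
    have := hbent 0
    rw [hbal] at this
    simp at this
    exact pow_ne_zero n (two_ne_zero) this.symm
  have hScard : S.card = 2 ^ n - 1 := by
    rw [hSdef, Finset.filter_ne', Finset.card_erase_of_mem (Finset.mem_univ _),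
      card_univ_V]
  have h2n1 : (1:ℕ) ≤ 2 ^ n := Nat.one_le_two_pow
  -- bent iff t = 0
  have hbent_t : ∀ b ∈ S, (IsBentB n F b ↔ t b = 0) := fun b hb =>
    bent_iff_t_zero (ht b (hmemS b hb))
  -- non-bent has t ≥ 2
  have ht2 : ∀ b ∈ S \ Bent, 2 ≤ t b := by
    intro b hb
    rw [Finset.mem_sdiff] at hb
    obtain ⟨hbS, hbnB⟩ := hb
    have hb0 := hmemS b hbS
    have hnotbent : ¬ IsBentB n F b := fun h => hbnB ((hmemBent b).mpr ⟨hb0, h⟩)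
    have ht0 : t b ≠ 0 := fun h => hnotbent ((hbent_t b hbS).mpr h)
    obtain ⟨a, ha⟩ := exists_nonzero_walsh F b
    rcases ht b hb0 a with h0 | h2
    · exact absurd h0 ha
    · have heven : Even (n + t b) := sq_eq_two_pow_even h2
      have : Even (t b) := by
        rcases Nat.even_add.mp heven with h
        exact h.mp hne
      obtain ⟨k, hk⟩ := this
      omega
  -- s
  set s : ℤ := ∑ b ∈ S, (walshB n F b 0) ^ 2 with hsdef
  have hsum_bent_t : ∑ b ∈ Bent, (2:ℤ) ^ (t b) = Bent.card := by
    rw [Finset.sum_congr rfl fun b hb => by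
      rw [(hbent_t b (hBentsub hb)).mp ((hmemBent b).mp hb).2, pow_zero]]
    simp
  have hsum_sdiff_t : ∑ b ∈ S \ Bent, (2:ℤ) ^ (t b) + Bent.card = 2 ^ (n+1) - 2 := by
    rw [← hsum_bent_t, Finset.sum_sdiff hBentsub, hsumt]
  have hsdc : (S \ Bent).card = S.card - Bent.card := Finset.card_sdiff_of_subset hBentsub
  have hBcle : Bent.card ≤ S.card := Finset.card_le_card hBentsub
  have h4le : ∀ b ∈ S \ Bent, (4:ℤ) ≤ 2 ^ (t b) := by
    intro b hb
    calc (4:ℤ) = 2 ^ 2 := by norm_num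
    _ ≤ 2 ^ (t b) := pow_le_pow_right₀ (by norm_num) (ht2 b hb)
  have hineq1 : (Bent.card : ℤ) + 4 * ((S.card : ℤ) - Bent.card) ≤ 2 ^ (n+1) - 2 := by
    have h1 : ((S \ Bent).card : ℤ) * 4 ≤ ∑ b ∈ S \ Bent, (2:ℤ) ^ (t b) := by
      have := Finset.card_nsmul_le_sum (S \ Bent) (fun b => (2:ℤ) ^ (t b)) 4 h4le
      rwa [nsmul_eq_mul] at this
    have h2 : ((S \ Bent).card : ℤ) = (S.card : ℤ) - Bent.card := by
      rw [hsdc]; push_cast [hBcle]; ring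
    rw [h2] at h1
    linarith [hsum_sdiff_t, h1]
  have h3Bc : 2 ^ (n+1) - 2 ≤ 3 * (Bent.card : ℤ) := by
    have hSZ : (S.card : ℤ) = 2 ^ n - 1 := by
      rw [hScard]; push_cast [h2n1]; ring
    rw [hSZ] at hineq1
    have : (2:ℤ) ^ (n+1) = 2 * 2 ^ n := by rw [pow_succ]; ring
    linarith
  have hbentW0 : ∀ b ∈ Bent, (walshB n F b 0) ^ 2 = 2 ^ n := fun b hb =>
    ((hmemBent b).mp hb).2 0
  have hs_split : s = ∑ b ∈ S \ Bent, (walshB n F b 0) ^ 2 + (Bent.card : ℤ) * 2 ^ n := by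
    rw [hsdef, ← Finset.sum_sdiff hBentsub]
    congr 1
    rw [Finset.sum_congr rfl hbentW0]
    simp [mul_comm]
  have hs_ge : (Bent.card : ℤ) * 2 ^ n ≤ s := by
    rw [hs_split]
    have : (0:ℤ) ≤ ∑ b ∈ S \ Bent, (walshB n F b 0) ^ 2 :=
      Finset.sum_nonneg fun b _ => sq_nonneg _
    linarith
  have hW0le : ∀ b ∈ S, (walshB n F b 0) ^ 2 ≤ 2 ^ (n + t b) := by
    intro b hb
    rcases ht b (hmemS b hb) 0 with h0 | h2
    · rw [h0]; positivity
    · exact le_of_eq h2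
  have hsum_up : ∑ b ∈ S, (2:ℤ) ^ (n + t b) = 2 ^ n * (2 ^ (n+1) - 2) := by
    rw [Finset.sum_congr rfl fun b (_ : b ∈ S) => pow_add (2:ℤ) n (t b),
      ← Finset.mul_sum, hsumt]
  have hubZ : s ≤ 2 ^ n * (2 ^ (n+1) - 2) := by
    rw [hsdef, ← hsum_up]
    exact Finset.sum_le_sum hW0le
  have hlbZ : 2 ^ n * (2 ^ (n+1) - 2) ≤ 3 * s := by
    have h1 := mul_le_mul_of_nonneg_left h3Bc (show (0:ℤ) ≤ 2 ^ n by positivity)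
    nlinarith [hs_ge]
  -- upper equality
  have hubeq : s = 2 ^ n * (2 ^ (n+1) - 2) ↔ ∀ b ∈ S, walshB n F b 0 ≠ 0 := by
    constructor
    · intro heq
      by_contra hcon
      push_neg at hcon
      obtain ⟨b0, hb0S, hb00⟩ := hcon
      have hlt : s < ∑ b ∈ S, (2:ℤ) ^ (n + t b) := by
        rw [hsdef]
        refine Finset.sum_lt_sum hW0le ⟨b0, hb0S, ?_⟩
        rw [hb00]
        positivity
      rw [hsum_up] at hlt
      exact absurd heq (ne_of_lt hlt)
    · intro hall
      rw [hsdef, ← hsum_up]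
      refine Finset.sum_congr rfl fun b hb => ?_
      rcases ht b (hmemS b hb) 0 with h0 | h2
      · exact absurd h0 (hall b hb)
      · exact h2
  -- divisibility
  have h3dvd : (3:ℕ) ∣ 2 ^ n - 1 := by
    obtain ⟨k, hk⟩ := hne
    have h4 : (2:ℕ) ^ n = 4 ^ k := by
      rw [show n = 2 * k from by omega, pow_mul]; norm_num
    have hmod : (4:ℕ) ^ k ≡ 1 ^ k [MOD 3] := Nat.ModEq.pow k (by decide)
    rw [one_pow] at hmod
    rw [h4]
    exact (Nat.modEq_iff_dvd' (Nat.one_le_two_pow.trans_eq (by rw [h4]) )).mp hmod.symm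
  -- lower equality
  have hlbeq : 3 * s = 2 ^ n * (2 ^ (n+1) - 2) ↔
      (Bent.card = 2 * (2 ^ n - 1) / 3 ∧ Bal.card = (2 ^ n - 1) / 3) := by
    constructor
    · intro heq
      have hp : (0:ℤ) < 2 ^ n := by positivity
      have hA : 3 * (Bent.card:ℤ) * 2 ^ n ≤ (2 ^ (n+1) - 2) * 2 ^ n := by
        linarith [hs_ge]
      have hB : 3 * (Bent.card:ℤ) ≤ 2 ^ (n+1) - 2 :=
        le_of_mul_le_mul_right hA hp
      have hBc3 : 3 * (Bent.card : ℤ) = 2 ^ (n+1) - 2 := le_antisymm hB h3Bc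
      have h3seq : 3 * s = 3 * ((Bent.card : ℤ) * 2 ^ n) := by
        linear_combination heq - (2:ℤ)^n * hBc3
      have hseq : s = (Bent.card : ℤ) * 2 ^ n :=
        mul_left_cancel₀ (by norm_num : (3:ℤ) ≠ 0) h3seq
      have hrest : ∑ b ∈ S \ Bent, (walshB n F b 0) ^ 2 = 0 := by
        rw [hs_split] at hseq; linarith
      have hzero : ∀ b ∈ S \ Bent, walshB n F b 0 = 0 := by
        intro b hb
        have := (Finset.sum_eq_zero_iff_of_nonneg
          (fun b _ => sq_nonneg (walshB n F b 0))).mp hrest b hb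
        exact sq_eq_zero_iff.mp this
      have hBalEq : Bal = S \ Bent := by
        apply Finset.Subset.antisymm
        · intro b hb
          rw [Finset.mem_sdiff]
          refine ⟨hBalsub hb, fun hbB => ?_⟩
          exact (Finset.disjoint_left.mp hdisj) hbB hb
        · intro b hb
          refine (hmemBal b).mpr ⟨hmemS b (Finset.mem_sdiff.mp hb).1, hzero b hb⟩
      have hBcNat : 3 * Bent.card = 2 ^ (n+1) - 2 := by
        have h2le : (2:ℕ) ≤ 2 ^ (n+1) := by
          calc (2:ℕ) = 2^1 := by norm_num
          _ ≤ 2 ^ (n+1) := Nat.pow_le_pow_right (by norm_num) (by omega)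
        have : ((3 * Bent.card : ℕ) : ℤ) = ((2 ^ (n+1) - 2 : ℕ) : ℤ) := by
          push_cast [h2le]
          linarith [hBc3]
        exact_mod_cast this
      have hBalCard : Bal.card = S.card - Bent.card := by
        rw [hBalEq, hsdc]
      constructor
      · have := hScard
        have h21 : (2:ℕ)^(n+1) = 2 * 2^n := by rw [pow_succ]; ring
        omega
      · have h21 : (2:ℕ)^(n+1) = 2 * 2^n := by rw [pow_succ]; ring
        rw [hBalCard, hScard]
        omega
    · rintro ⟨hBc, hBl⟩
      obtain ⟨d, hd⟩ := h3dvd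
      have hBcN : Bent.card = 2 * d := by omega
      have hBlN : Bal.card = d := by omega
      have hcardsum : Bent.card + Bal.card = S.card := by rw [hScard]; omega
      have hunion : Bent ∪ Bal = S := by
        apply Finset.eq_of_subset_of_card_le
        · intro b hb
          rcases Finset.mem_union.mp hb with h | h
          · exact hBentsub h
          · exact hBalsub h
        · rw [Finset.card_union_of_disjoint hdisj, hcardsum]
      have hzero : ∀ b ∈ S \ Bent, walshB n F b 0 = 0 := by
        intro b hb
        rw [Finset.mem_sdiff] at hb
        have : b ∈ Bent ∪ Bal := by rw [hunion]; exact hb.1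
        rcases Finset.mem_union.mp this with h | h
        · exact absurd h hb.2
        · exact ((hmemBal b).mp h).2
      have hrest : ∑ b ∈ S \ Bent, (walshB n F b 0) ^ 2 = 0 :=
        Finset.sum_eq_zero fun b hb => by rw [hzero b hb]; ring
      have hseq : s = (Bent.card : ℤ) * 2 ^ n := by rw [hs_split, hrest]; ring
      have hBcZ : ((Bent.card : ℕ) : ℤ) = 2 * d := by exact_mod_cast hBcN
      have hdZ : (3:ℤ) * d = 2 ^ n - 1 := by
        have : ((2^n - 1 : ℕ) : ℤ) = 3 * d := by exact_mod_cast hd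
        rw [← this]; push_cast [h2n1]; ring
      rw [hseq, hBcZ]
      linear_combination (2 * (2:ℤ)^n) * hdZ
  -- real conversion
  have h2npos : (0:ℝ) < 2 ^ n := by positivity
  have hNb : NbB n F = (s : ℝ) / 2 ^ n := by
    rw [NbB, inv_mul_eq_div]
    congr 1
    rw [hsdef]
    push_cast
    rfl
  have hcastle : ∀ x y : ℤ, ((x:ℝ) ≤ y ↔ x ≤ y) := fun x y => Int.cast_le
  refine ⟨⟨?_, ?_⟩, ?_, ?_⟩
  · -- lower bound
    rw [hNb, div_le_div_iff₀ (by norm_num) h2npos]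
    have : ((2^n * (2^(n+1) - 2) : ℤ) : ℝ) ≤ ((3 * s : ℤ) : ℝ) := Int.cast_le.mpr hlbZ
    push_cast at this
    linarith
  · -- upper bound
    rw [hNb, div_le_iff₀ h2npos]
    have : ((s : ℤ) : ℝ) ≤ ((2^n * (2^(n+1) - 2) : ℤ) : ℝ) := Int.cast_le.mpr hubZ
    push_cast at this
    linarith
  · -- lower equality iff
    rw [hNb]
    rw [div_eq_div_iff (ne_of_gt h2npos) (by norm_num : (3:ℝ) ≠ 0)]
    have hiff : (s : ℝ) * 3 = ((2:ℝ) ^ (n + 1) - 2) * 2 ^ n ↔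
        3 * s = 2 ^ n * (2 ^ (n+1) - 2) := by
      rw [show ((2:ℝ) ^ (n + 1) - 2) * 2 ^ n = (((2^n * (2^(n+1) - 2) : ℤ)):ℝ) by
          push_cast; ring,
        show ((s:ℝ) * 3) = ((3 * s : ℤ):ℝ) by push_cast; ring, Int.cast_inj]
    rw [hiff, hlbeq]
  · -- upper equality iff
    rw [hNb, div_eq_iff (ne_of_gt h2npos)]
    have hiff : (s : ℝ) = ((2:ℝ) ^ (n + 1) - 2) * 2 ^ n ↔
        s = 2 ^ n * (2 ^ (n+1) - 2) := by
      rw [show ((2:ℝ) ^ (n + 1) - 2) * 2 ^ n = (((2^n * (2^(n+1) - 2) : ℤ)):ℝ) by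
          push_cast; ring, Int.cast_inj]
    rw [hiff, hubeq]
    constructor
    · intro h b hb; exact h b ((hmemS' b).mpr hb)
    · intro h b hb; exact h b (hmemS b hb)
end

section
/- Let n be an even positive integer and F : 𝔽_2^n → 𝔽_2^n a plateaued APN function. Then Nb_F is an integer congruent to 2 modulo 4. In particular, if at least one nonzero component of F is balanced, then Nb_F ≤ 2^{n+1} − 6. -/
open Finset

namespace PlatAux

def chi (u : ZMod 2) : ℤ := (-1) ^ u.val

lemma chi_add (u v : ZMod 2) : chi (u + v) = chi u * chi v := by revert u v; decide
lemma chi_mul_self (u : ZMod 2) : chi u * chi u = 1 := by revert u; decide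
lemma chi_zero : chi 0 = 1 := by decide
lemma chi_one : chi 1 = -1 := by decide
lemma chi_ne (u : ZMod 2) : chi u ≠ 0 := by revert u; decide

variable {n : ℕ}

lemma dotl (b : Fin n → ZMod 2) (u v : Fin n → ZMod 2) :
    (∑ i, b i * (u i + v i)) = (∑ i, b i * u i) + (∑ i, b i * v i) := by
  rw [← Finset.sum_add_distrib]
  exact Finset.sum_congr rfl fun i _ => mul_add _ _ _

lemma sum_chi (c : Fin n → ZMod 2) :
    (∑ a : Fin n → ZMod 2, chi (∑ i, a i * c i)) = if c = 0 then (2:ℤ)^n else 0 := by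
  split_ifs with h
  · subst h
    simp only [Pi.zero_apply, mul_zero, Finset.sum_const_zero, chi_zero,
      Finset.sum_const, Finset.card_univ, nsmul_eq_mul, mul_one]
    simp [Fintype.card_fun]
  · obtain ⟨i, hi⟩ : ∃ i, c i ≠ 0 := by
      by_contra hc; push_neg at hc; exact h (funext hc)
    have hci : c i = 1 := by
      have h1 : ∀ u : ZMod 2, u ≠ 0 → u = 1 := by decide
      exact h1 _ hi
    have e : Fin n → ZMod 2 := Pi.single i 1
    apply Finset.sum_ninvolution
      (g := fun a : Fin n → ZMod 2 => a + (Pi.single i 1 : Fin n → ZMod 2))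
    · intro a
      have hs : (∑ j, (a + (Pi.single i 1 : Fin n → ZMod 2)) j * c j)
          = (∑ j, a j * c j) + 1 := by
        have : ∀ j, (a + (Pi.single i 1 : Fin n → ZMod 2)) j * c j = a j * c j + (Pi.single i 1 : Fin n → ZMod 2) j * c j := by
          intro j; rw [Pi.add_apply, add_mul]
        rw [Finset.sum_congr rfl fun j _ => this j, Finset.sum_add_distrib]
        congr 1
        rw [Finset.sum_eq_single i]
        · simp [hci]
        · intro j _ hj; simp [Pi.single_eq_of_ne hj]
        · simp
      rw [hs, chi_add, chi_one]; ring
    · intro a _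
      intro hgg
      have := congrFun hgg i
      simp at this
    · intro a; exact Finset.mem_univ _
    · intro a
      funext j
      by_cases hj : j = i
      · subst hj
        have h11 : (1:ZMod 2) + 1 = 0 := by decide
        simp [add_assoc, h11]
      · simp [Pi.single_eq_of_ne hj]


lemma add_self_eq (x : Fin n → ZMod 2) : x + x = 0 := by
  funext i
  rw [Pi.add_apply]
  revert x; intro x
  have : ∀ u : ZMod 2, u + u = 0 := by decide
  exact this _

lemma add_eq_zero_iff {x y : Fin n → ZMod 2} : x + y = 0 ↔ x = y := by
  constructor
  · intro h
    have : x + (y + y) = (x + y) + y := (add_assoc x y y).symm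
    rw [add_self_eq, add_zero, h, zero_add] at this
    exact this
  · rintro rfl; exact add_self_eq x

lemma gparseval (G : (Fin n → ZMod 2) → ℤ) :
    ∑ a : Fin n → ZMod 2, (∑ x : Fin n → ZMod 2, G x * chi (∑ i, a i * x i)) ^ 2
      = 2 ^ n * ∑ x : Fin n → ZMod 2, (G x) ^ 2 := by
  have expand : ∀ a : Fin n → ZMod 2, (∑ x : Fin n → ZMod 2, G x * chi (∑ i, a i * x i)) ^ 2
      = ∑ x : Fin n → ZMod 2, ∑ y : Fin n → ZMod 2,
          G x * G y * chi (∑ i, a i * ((x + y) i)) := by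
    intro a
    rw [sq, Finset.sum_mul_sum]
    refine Finset.sum_congr rfl fun x _ => Finset.sum_congr rfl fun y _ => ?_
    have : (∑ i, a i * ((x + y) i)) = (∑ i, a i * x i) + (∑ i, a i * y i) := by
      simpa using dotl a x y
    rw [this, chi_add]; ring
  simp_rw [expand]
  rw [Finset.sum_comm]
  have swap2 : ∀ x : Fin n → ZMod 2,
      (∑ a : Fin n → ZMod 2, ∑ y : Fin n → ZMod 2, G x * G y * chi (∑ i, a i * ((x + y) i)))
      = ∑ y : Fin n → ZMod 2, G x * G y * (if x + y = 0 then (2:ℤ)^n else 0) := by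
    intro x
    rw [Finset.sum_comm]
    refine Finset.sum_congr rfl fun y _ => ?_
    rw [← Finset.mul_sum, sum_chi]
  simp_rw [swap2]
  have step : ∀ x : Fin n → ZMod 2,
      (∑ y : Fin n → ZMod 2, G x * G y * (if x + y = 0 then (2:ℤ)^n else 0))
        = G x ^ 2 * 2 ^ n := by
    intro x
    rw [Finset.sum_eq_single x]
    · rw [if_pos (add_self_eq x), sq]
    · intro y _ hy
      rw [if_neg, mul_zero]
      intro hc
      exact hy (add_eq_zero_iff.mp hc).symm
    · simp
  simp_rw [step]
  rw [← Finset.sum_mul]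
  ring


lemma walsh_repr (n : ℕ) (F : (Fin n → ZMod 2) → (Fin n → ZMod 2)) (b a : Fin n → ZMod 2) :
    walshB n F b a = ∑ x : Fin n → ZMod 2, chi (∑ i, b i * F x i) * chi (∑ i, a i * x i) := by
  unfold walshB chi
  refine Finset.sum_congr rfl fun x _ => ?_
  rw [pow_add]

lemma parseval (n : ℕ) (F : (Fin n → ZMod 2) → (Fin n → ZMod 2)) (b : Fin n → ZMod 2) :
    ∑ a : Fin n → ZMod 2, (walshB n F b a) ^ 2 = 2 ^ n * 2 ^ n := by
  have h := gparseval (n := n) (G := fun x => chi (∑ i, b i * F x i))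
  simp_rw [← walsh_repr] at h
  rw [h]
  have : ∀ x : Fin n → ZMod 2, (chi (∑ i, b i * F x i)) ^ 2 = 1 := by
    intro x; rw [sq, chi_mul_self]
  simp_rw [this]
  simp [Fintype.card_fun]

/-- autocorrelation -/
def acor (n : ℕ) (F : (Fin n → ZMod 2) → (Fin n → ZMod 2)) (b z : Fin n → ZMod 2) : ℤ :=
  ∑ x : Fin n → ZMod 2, chi (∑ i, b i * (F x i + F (x + z) i))

lemma walsh_sq (n : ℕ) (F : (Fin n → ZMod 2) → (Fin n → ZMod 2)) (b a : Fin n → ZMod 2) :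
    (walshB n F b a) ^ 2 = ∑ z : Fin n → ZMod 2, acor n F b z * chi (∑ i, a i * z i) := by
  rw [walsh_repr, sq, Finset.sum_mul_sum]
  have reidx : ∀ x : Fin n → ZMod 2,
      (∑ y : Fin n → ZMod 2, (chi (∑ i, b i * F x i) * chi (∑ i, a i * x i)) *
          (chi (∑ i, b i * F y i) * chi (∑ i, a i * y i)))
      = ∑ z : Fin n → ZMod 2, chi (∑ i, b i * (F x i + F (x + z) i)) * chi (∑ i, a i * z i) := by
    intro x
    rw [← Fintype.sum_equiv (Equiv.addLeft x)
      (fun z => (chi (∑ i, b i * F x i) * chi (∑ i, a i * x i)) *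
          (chi (∑ i, b i * F (x + z) i) * chi (∑ i, a i * (x + z) i)))
      (fun y => (chi (∑ i, b i * F x i) * chi (∑ i, a i * x i)) *
          (chi (∑ i, b i * F y i) * chi (∑ i, a i * y i)))
      (fun z => rfl)]
    refine Finset.sum_congr rfl fun z _ => ?_
    have h1 : (∑ i, a i * (x + z) i) = (∑ i, a i * x i) + (∑ i, a i * z i) := by
      simpa using dotl a x z
    have h2 : (∑ i, b i * (F x i + F (x + z) i))
        = (∑ i, b i * F x i) + (∑ i, b i * F (x + z) i) := dotl b _ _
    rw [h1, h2, chi_add, chi_add]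
    have hx := chi_mul_self (∑ i, a i * x i)
    linear_combination (chi (∑ i, b i * F x i) * chi (∑ i, b i * F (x + z) i) *
      chi (∑ i, a i * z i)) * hx
  rw [Finset.sum_congr rfl fun x _ => reidx x, Finset.sum_comm]
  refine Finset.sum_congr rfl fun z _ => ?_
  rw [acor, Finset.sum_mul]

lemma fourth_plateaued (n : ℕ) (F : (Fin n → ZMod 2) → (Fin n → ZMod 2))
    (b : Fin n → ZMod 2) (t : ℕ) (h : IsTPlateauedB n F b t) :
    ∑ a : Fin n → ZMod 2, (walshB n F b a) ^ 4 = 2 ^ (n + t) * (2 ^ n * 2 ^ n) := by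
  have h4 : ∀ a : Fin n → ZMod 2, (walshB n F b a) ^ 4 = 2 ^ (n + t) * (walshB n F b a) ^ 2 := by
    intro a
    rcases h a with h0 | h2
    · rw [h0]; ring
    · rw [show (4:ℕ) = 2*2 from rfl, pow_mul, h2, sq]
  simp_rw [h4]
  rw [← Finset.mul_sum, parseval]

lemma fourth_total (n : ℕ) (F : (Fin n → ZMod 2) → (Fin n → ZMod 2)) (b : Fin n → ZMod 2) :
    ∑ a : Fin n → ZMod 2, (walshB n F b a) ^ 4
      = 2 ^ n * ∑ z : Fin n → ZMod 2, (acor n F b z) ^ 2 := by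
  have h4 : ∀ a : Fin n → ZMod 2, (walshB n F b a) ^ 4 = ((walshB n F b a) ^ 2) ^ 2 := by
    intro a; ring
  simp_rw [h4, walsh_sq]
  exact gparseval _


lemma sum_acor_sq (n : ℕ) (F : (Fin n → ZMod 2) → (Fin n → ZMod 2)) (z : Fin n → ZMod 2) :
    ∑ b : Fin n → ZMod 2, (acor n F b z) ^ 2
      = ∑ x : Fin n → ZMod 2, ∑ y : Fin n → ZMod 2,
          (if F (x + z) + F x = F (y + z) + F y then (2:ℤ)^n else 0) := by
  have expand : ∀ b : Fin n → ZMod 2, (acor n F b z) ^ 2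
      = ∑ x : Fin n → ZMod 2, ∑ y : Fin n → ZMod 2,
          chi (∑ i, b i * ((F x i + F (x + z) i) + (F y i + F (y + z) i))) := by
    intro b
    rw [acor, sq, Finset.sum_mul_sum]
    refine Finset.sum_congr rfl fun x _ => Finset.sum_congr rfl fun y _ => ?_
    rw [dotl b (fun i => F x i + F (x + z) i) (fun i => F y i + F (y + z) i), chi_add]
  simp_rw [expand]
  rw [Finset.sum_comm]
  refine Finset.sum_congr rfl fun x _ => ?_
  rw [Finset.sum_comm]
  refine Finset.sum_congr rfl fun y _ => ?_
  have := sum_chi (n := n) (fun i => (F x i + F (x + z) i) + (F y i + F (y + z) i))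
  rw [this]
  congr 1
  have hz2 : ∀ p q r s : ZMod 2, (p + q + (r + s) = 0) ↔ (q + p = s + r) := by decide
  simp only [eq_iff_iff]
  constructor
  · intro hc
    funext i
    have := congrFun hc i
    simp only [Pi.zero_apply] at this
    have := (hz2 _ _ _ _).mp this
    simpa using this
  · intro hc
    funext i
    have := congrFun hc i
    simp only [Pi.add_apply, Pi.zero_apply]
    exact (hz2 _ _ _ _).mpr (by simpa using this)

lemma count_zero (n : ℕ) (F : (Fin n → ZMod 2) → (Fin n → ZMod 2)) :
    ∑ x : Fin n → ZMod 2, ∑ y : Fin n → ZMod 2,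
        (if F (x + 0) + F x = F (y + 0) + F y then (2:ℤ)^n else 0)
      = 2^n * (2^n * 2^n) := by
  have : ∀ x y : Fin n → ZMod 2, F (x + 0) + F x = F (y + 0) + F y := by
    intro x y
    rw [add_zero, add_zero, add_self_eq, add_self_eq]
  simp_rw [if_pos (this _ _)]
  simp [Fintype.card_fun]

lemma count_ne (n : ℕ) (F : (Fin n → ZMod 2) → (Fin n → ZMod 2)) (hapn : IsAPNB n F)
    (z : Fin n → ZMod 2) (hz : z ≠ 0) :
    ∑ x : Fin n → ZMod 2, ∑ y : Fin n → ZMod 2,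
        (if F (x + z) + F x = F (y + z) + F y then (2:ℤ)^n else 0)
      = 2^n * (2 * 2^n) := by
  have inner : ∀ x : Fin n → ZMod 2,
      (∑ y : Fin n → ZMod 2, (if F (x + z) + F x = F (y + z) + F y then (2:ℤ)^n else 0))
        = 2 * 2^n := by
    intro x
    classical
    rw [← Finset.sum_filter]
    rw [Finset.sum_const]
    have hfe : (univ.filter fun y => F (x + z) + F x = F (y + z) + F y)
        = (univ.filter fun y => F (y + z) + F y = F (x + z) + F x) := by
      apply Finset.filter_congr
      intro y _
      exact ⟨Eq.symm, Eq.symm⟩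
    have hcard : (univ.filter fun y => F (x + z) + F x = F (y + z) + F y).card = 2 := by
      have hle : (univ.filter fun y => F (x + z) + F x = F (y + z) + F y).card ≤ 2 := by
        rw [hfe]; exact hapn z hz (F (x + z) + F x)
      have hlt : 1 < (univ.filter fun y => F (x + z) + F x = F (y + z) + F y).card := by
        rw [Finset.one_lt_card]
        refine ⟨x, ?_, x + z, ?_, ?_⟩
        · simp
        · simp only [Finset.mem_filter, Finset.mem_univ, true_and]
          have hxz : (x + z) + z = x := by
            rw [add_assoc, add_self_eq, add_zero]
          rw [hxz]
          exact add_comm _ _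
        · intro hxx
          exact hz (left_eq_add.mp hxx)
      omega
    rw [hcard]
    simp
  simp_rw [inner]
  simp [Fintype.card_fun]

lemma walsh_zero_left (n : ℕ) (F : (Fin n → ZMod 2) → (Fin n → ZMod 2)) (a : Fin n → ZMod 2) :
    walshB n F 0 a = if a = 0 then (2:ℤ)^n else 0 := by
  rw [walsh_repr]
  simp only [Pi.zero_apply, zero_mul, Finset.sum_const_zero, chi_zero, one_mul]
  have hc : ∀ x : Fin n → ZMod 2, (∑ i, a i * x i) = (∑ i, x i * a i) := by
    intro x; exact Finset.sum_congr rfl fun i _ => mul_comm _ _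
  simp_rw [hc]
  exact sum_chi a

lemma sq_eq_two_pow_even {m : ℤ} {k : ℕ} (h : m ^ 2 = 2 ^ k) : Even k := by
  have hm : m ≠ 0 := by
    rintro rfl
    have : (0:ℤ) < 2 ^ k := by positivity
    simp at h
    omega
  have h2 : m.natAbs ^ 2 = 2 ^ k := by
    have := congrArg Int.natAbs h
    simpa [Int.natAbs_pow] using this
  have hma : m.natAbs ≠ 0 := Int.natAbs_ne_zero.mpr hm
  have hf := congrArg (fun s : ℕ => s.factorization 2) h2
  simp only [Nat.factorization_pow, Finsupp.smul_apply, smul_eq_mul] at hf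
  rw [Nat.Prime.factorization Nat.prime_two] at hf
  simp only [Finsupp.single_eq_same] at hf
  exact ⟨m.natAbs.factorization 2, by omega⟩


lemma key_sum (n : ℕ) (F : (Fin n → ZMod 2) → (Fin n → ZMod 2))
    (hapn : IsAPNB n F) (T : (Fin n → ZMod 2) → ℕ)
    (hT : ∀ b : Fin n → ZMod 2, b ≠ 0 → IsTPlateauedB n F b (T b)) :
    ∑ b ∈ Finset.univ.erase (0 : Fin n → ZMod 2), (2:ℤ) ^ (T b) = 2^(n+1) - 2 := by
  classical
  have hcard : (Fintype.card (Fin n → ZMod 2)) = 2^n := by simp [Fintype.card_fun]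
  have hzsum : ∀ z : Fin n → ZMod 2, (∑ b : Fin n → ZMod 2, (acor n F b z)^2)
      = if z = 0 then (2:ℤ)^n*(2^n*2^n) else 2^n*(2*2^n) := by
    intro z
    rw [sum_acor_sq]
    split_ifs with h
    · subst h; exact count_zero n F
    · exact count_ne n F hapn z h
  have H1 : ∑ b : Fin n → ZMod 2, ∑ a : Fin n → ZMod 2, (walshB n F b a)^4
      = (2:ℤ)^n * ((2:ℤ)^n*(2^n*2^n) + ((2:ℤ)^n - 1)*(2^n*(2*2^n))) := by
    have h4 : ∀ b : Fin n → ZMod 2, ∑ a : Fin n → ZMod 2, (walshB n F b a)^4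
        = 2^n * ∑ z : Fin n → ZMod 2, (acor n F b z)^2 :=
      fun b => fourth_total n F b
    simp_rw [h4]
    rw [← Finset.mul_sum, Finset.sum_comm]
    simp_rw [hzsum]
    rw [← Finset.add_sum_erase _ _ (Finset.mem_univ (0 : Fin n → ZMod 2))]
    rw [if_pos rfl]
    have herase : ∀ z ∈ Finset.univ.erase (0 : Fin n → ZMod 2),
        (if z = 0 then (2:ℤ)^n*(2^n*2^n) else 2^n*(2*2^n)) = 2^n*(2*2^n) := by
      intro z hzz
      rw [if_neg (Finset.mem_erase.mp hzz).1]
    rw [Finset.sum_congr rfl herase, Finset.sum_const,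
      Finset.card_erase_of_mem (Finset.mem_univ _), Finset.card_univ, hcard]
    have h1 : (1:ℕ) ≤ 2^n := Nat.one_le_two_pow
    rw [nsmul_eq_mul, Nat.cast_sub h1]
    push_cast
    ring
  have H2 : ∑ b : Fin n → ZMod 2, ∑ a : Fin n → ZMod 2, (walshB n F b a)^4
      = ((2:ℤ)^n)^4 + (∑ b ∈ Finset.univ.erase (0 : Fin n → ZMod 2), (2:ℤ)^(T b))
          * ((2:ℤ)^n*(2^n*2^n)) := by
    rw [← Finset.add_sum_erase _ _ (Finset.mem_univ (0 : Fin n → ZMod 2))]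
    congr 1
    · simp_rw [walsh_zero_left]
      have hpow : ∀ a : Fin n → ZMod 2,
          (if a = 0 then (2:ℤ)^n else 0)^4 = (if a = 0 then ((2:ℤ)^n)^4 else 0) := by
        intro a; split_ifs <;> simp
      simp_rw [hpow]
      rw [Finset.sum_ite_eq' Finset.univ (0 : Fin n → ZMod 2) (fun _ => ((2:ℤ)^n)^4),
        if_pos (Finset.mem_univ _)]
    · rw [Finset.sum_mul]
      refine Finset.sum_congr rfl fun b hb => ?_
      have hb0 := (Finset.mem_erase.mp hb).1
      rw [fourth_plateaued n F b (T b) (hT b hb0), pow_add]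
      ring
  have hPne : ((2:ℤ)^n*(2^n*2^n)) ≠ 0 := by positivity
  have hh := H1.symm.trans H2
  apply mul_right_cancel₀ hPne
  linear_combination -hh


lemma exists_walsh_ne (n : ℕ) (F : (Fin n → ZMod 2) → (Fin n → ZMod 2)) (b : Fin n → ZMod 2) :
    ∃ a : Fin n → ZMod 2, walshB n F b a ≠ 0 := by
  by_contra hc
  push_neg at hc
  have hp := parseval n F b
  have h0 : ∑ a : Fin n → ZMod 2, (walshB n F b a)^2 = 0 := by
    apply Finset.sum_eq_zero; intro a _; rw [hc a]; ring
  rw [h0] at hp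
  have h2 : (0:ℤ) < 2^n * 2^n := by positivity
  linarith

lemma T_even {n : ℕ} (hne : Even n) {F : (Fin n → ZMod 2) → (Fin n → ZMod 2)}
    {b : Fin n → ZMod 2} {t : ℕ} (h : IsTPlateauedB n F b t) : Even t := by
  obtain ⟨a, ha⟩ := exists_walsh_ne n F b
  rcases h a with h0 | h2
  · exact absurd h0 ha
  · have he : Even (n + t) := sq_eq_two_pow_even h2
    rcases hne with ⟨k, hk⟩
    rcases he with ⟨m, hm⟩
    exact ⟨m - k, by omega⟩

lemma T_ne_zero {n : ℕ} {F : (Fin n → ZMod 2) → (Fin n → ZMod 2)}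
    {b : Fin n → ZMod 2} {t : ℕ} (h : IsTPlateauedB n F b t)
    (h0 : walshB n F b 0 = 0) : t ≠ 0 := by
  rintro rfl
  have hp := parseval n F b
  have hb : ∀ a : Fin n → ZMod 2, (walshB n F b a)^2 ≤ (if a = 0 then 0 else (2:ℤ)^n) := by
    intro a
    split_ifs with ha
    · subst ha; rw [h0]; norm_num
    · rcases h a with hh | hh
      · rw [hh]; positivity
      · rw [hh, Nat.add_zero]
  have hle := Finset.sum_le_sum (s := Finset.univ) (fun a _ => hb a)
  rw [hp] at hle
  have hR : ∑ a : Fin n → ZMod 2, (if a = 0 then 0 else (2:ℤ)^n) = 2^n * 2^n - 2^n := by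
    have hsplit : ∀ a : Fin n → ZMod 2,
        (if a = 0 then (0:ℤ) else (2:ℤ)^n) = 2^n - (if a = 0 then (2:ℤ)^n else 0) := by
      intro a; split_ifs <;> ring
    simp_rw [hsplit]
    rw [Finset.sum_sub_distrib, Finset.sum_const, Finset.card_univ,
      Finset.sum_ite_eq' Finset.univ (0 : Fin n → ZMod 2) (fun _ => (2:ℤ)^n),
      if_pos (Finset.mem_univ _)]
    simp [Fintype.card_fun]
  rw [hR] at hle
  have hpos : (0:ℤ) < 2^n := by positivity
  linarith

end PlatAux

theorem plateaued_apn_imbalance_mod_four (n : ℕ) (hn : 0 < n) (hne : Even n)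
    (F : (Fin n → ZMod 2) → (Fin n → ZMod 2))
    (hplat : IsPlateauedB n F) (hapn : IsAPNB n F) :
    (∃ N : ℤ, (N : ℝ) = NbB n F ∧ N % 4 = 2) ∧
    ((∃ b : Fin n → ZMod 2, b ≠ 0 ∧ walshB n F b 0 = 0) →
      NbB n F ≤ (2 : ℝ) ^ (n + 1) - 6) := by
  classical
  have hfilter : (univ.filter (fun b : Fin n → ZMod 2 => b ≠ 0))
      = univ.erase (0 : Fin n → ZMod 2) := Finset.filter_ne' _ _
  set T : (Fin n → ZMod 2) → ℕ :=
    fun b => if h : b ≠ 0 then (hplat b h).choose else 0 with hTdef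
  have hT : ∀ b : Fin n → ZMod 2, b ≠ 0 → IsTPlateauedB n F b (T b) := by
    intro b hb
    simp only [hTdef, dif_pos hb]
    exact (hplat b hb).choose_spec
  have hkey := PlatAux.key_sum n F hapn T hT
  set S := univ.erase (0 : Fin n → ZMod 2) with hSdef
  set N : ℤ := ∑ b ∈ S, (if walshB n F b 0 = 0 then 0 else (2:ℤ)^(T b)) with hN
  have hTge : ∀ b ∈ S, walshB n F b 0 = 0 → 2 ≤ T b := by
    intro b hb h0
    have hb0 : b ≠ 0 := (Finset.mem_erase.mp hb).1
    have he : Even (T b) := PlatAux.T_even hne (hT b hb0)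
    have hne0 : T b ≠ 0 := PlatAux.T_ne_zero (hT b hb0) h0
    rcases he with ⟨k, hk⟩; omega
  have hterm : ∀ b ∈ S, (walshB n F b 0)^2
      = 2^n * (if walshB n F b 0 = 0 then 0 else (2:ℤ)^(T b)) := by
    intro b hb
    have hb0 : b ≠ 0 := (Finset.mem_erase.mp hb).1
    by_cases h0 : walshB n F b 0 = 0
    · rw [if_pos h0, h0]; ring
    · rw [if_neg h0]
      rcases hT b hb0 0 with h | h
      · exact absurd h h0
      · rw [h, pow_add]
  have h2Rne : ((2:ℝ)^n) ≠ 0 := by positivity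
  have hNbB : (N : ℝ) = NbB n F := by
    rw [NbB, hfilter]
    have hcast : ∑ b ∈ S, ((walshB n F b 0 : ℝ))^2
        = ((∑ b ∈ S, (walshB n F b 0)^2 : ℤ) : ℝ) := by push_cast; rfl
    rw [hcast, Finset.sum_congr rfl hterm, ← Finset.mul_sum, ← hN]
    push_cast
    field_simp
  have hdvd : (4:ℤ) ∣ (∑ b ∈ S, (2:ℤ)^(T b)) - N := by
    rw [hN, ← Finset.sum_sub_distrib]
    apply Finset.dvd_sum
    intro b hb
    by_cases h0 : walshB n F b 0 = 0
    · rw [if_pos h0, sub_zero]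
      have h2 : 2 ≤ T b := hTge b hb h0
      have : (4:ℤ) = 2^2 := by norm_num
      rw [this]
      exact pow_dvd_pow 2 h2
    · rw [if_neg h0, sub_self]
      exact dvd_zero _
  have h4pow : (4:ℤ) ∣ 2^(n+1) := by
    obtain ⟨m, hm⟩ : ∃ m, n = m + 1 := ⟨n - 1, by omega⟩
    subst hm
    exact ⟨2^m, by ring⟩
  have hNmod : N % 4 = 2 := by
    rw [hkey] at hdvd
    obtain ⟨c, hc⟩ := hdvd
    obtain ⟨d, hd⟩ := h4pow
    omega
  refine ⟨⟨N, hNbB, hNmod⟩, ?_⟩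
  rintro ⟨b₀, hb₀, hw0⟩
  have hb₀S : b₀ ∈ S := Finset.mem_erase.mpr ⟨hb₀, Finset.mem_univ _⟩
  have hle : N + 2^(T b₀) ≤ ∑ b ∈ S, (2:ℤ)^(T b) := by
    rw [← Finset.add_sum_erase _ _ hb₀S, hN, ← Finset.add_sum_erase _ _ hb₀S,
      if_pos hw0, zero_add]
    have hmono : ∑ b ∈ S.erase b₀, (if walshB n F b 0 = 0 then 0 else (2:ℤ)^(T b))
        ≤ ∑ b ∈ S.erase b₀, (2:ℤ)^(T b) := by
      apply Finset.sum_le_sum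
      intro b _
      split_ifs
      · positivity
      · exact le_refl _
    linarith
  have h4le : (4:ℤ) ≤ 2^(T b₀) := by
    have h2 : 2 ≤ T b₀ := hTge b₀ hb₀S hw0
    calc (4:ℤ) = 2^2 := by norm_num
    _ ≤ 2^(T b₀) := by
      apply pow_le_pow_right₀ (by norm_num) h2
  have hNle : N ≤ 2^(n+1) - 6 := by
    rw [hkey] at hle
    linarith
  rw [← hNbB]
  have : ((N:ℝ)) ≤ (((2:ℤ)^(n+1) - 6 : ℤ) : ℝ) := by exact_mod_cast hNle
  push_cast at this
  linarith
end

section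
/- Let n be an even positive integer and F : 𝔽_2^n → 𝔽_2^n a plateaued APN function. Then the number of nonzero b ∈ 𝔽_2^n for which the component F_b is bent is congruent to 2 modulo 4. -/
open Finset

def chiB (c : ZMod 2) : ℤ := (-1) ^ c.val

lemma chiB_zero : chiB 0 = 1 := rfl
lemma chiB_add : ∀ c d : ZMod 2, chiB (c + d) = chiB c * chiB d := by decide
lemma chiB_mul_self : ∀ c : ZMod 2, chiB c * chiB c = 1 := by decide

lemma chiB_sum {α : Type*} (s : Finset α) (f : α → ZMod 2) :
    chiB (∑ i ∈ s, f i) = ∏ i ∈ s, chiB (f i) := by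
  induction s using Finset.cons_induction with
  | empty => simp [chiB_zero]
  | cons a s ha ih => simp [Finset.sum_cons, Finset.prod_cons, chiB_add, ih]

lemma sum_chiB_dot (n : ℕ) (u : Fin n → ZMod 2) :
    ∑ a : Fin n → ZMod 2, chiB (∑ i, a i * u i) = if u = 0 then 2 ^ n else 0 := by
  have key : ∀ v : ZMod 2, ∑ c : ZMod 2, chiB (c * v) = if v = 0 then 2 else 0 := by decide
  calc ∑ a : Fin n → ZMod 2, chiB (∑ i, a i * u i)
      = ∑ a : Fin n → ZMod 2, ∏ i, chiB (a i * u i) := by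
        simp [chiB_sum]
    _ = ∏ i, ∑ c : ZMod 2, chiB (c * u i) := by
        rw [Finset.prod_univ_sum]
        simp [Fintype.piFinset_univ]
    _ = ∏ i : Fin n, (if u i = 0 then (2:ℤ) else 0) := by
        simp [key]
    _ = if u = 0 then 2 ^ n else 0 := by
        by_cases h : u = 0
        · simp [h, Finset.prod_const]
        · obtain ⟨i, hi⟩ := Function.ne_iff.mp h
          simp only [Pi.zero_apply] at hi
          rw [if_neg h]
          exact Finset.prod_eq_zero (Finset.mem_univ i) (by simp [hi])

lemma dot_add (n : ℕ) (a u v : Fin n → ZMod 2) :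
    (∑ i, a i * u i) + (∑ i, a i * v i) = ∑ i, a i * (u + v) i := by
  rw [← Finset.sum_add_distrib]
  simp [mul_add]

lemma sum_sq_general {α : Type*} [Fintype α] (n : ℕ) (c : α → ℤ)
    (h : α → (Fin n → ZMod 2)) :
    ∑ a : Fin n → ZMod 2, (∑ x : α, c x * chiB (∑ i, a i * h x i)) ^ 2
      = 2 ^ n * ∑ x : α, ∑ y : α, (if h x + h y = 0 then c x * c y else 0) := by
  have expand : ∀ a : Fin n → ZMod 2,
      (∑ x : α, c x * chiB (∑ i, a i * h x i)) ^ 2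
        = ∑ x : α, ∑ y : α, c x * c y * chiB (∑ i, a i * (h x + h y) i) := by
    intro a
    rw [sq, Finset.sum_mul_sum]
    refine Finset.sum_congr rfl fun x _ => Finset.sum_congr rfl fun y _ => ?_
    rw [← dot_add, chiB_add]
    ring
  simp only [expand]
  rw [Finset.sum_comm]
  rw [Finset.mul_sum]
  refine Finset.sum_congr rfl fun x _ => ?_
  rw [Finset.sum_comm, Finset.mul_sum]
  refine Finset.sum_congr rfl fun y _ => ?_
  rw [← Finset.mul_sum, sum_chiB_dot]
  by_cases hxy : h x + h y = 0 <;> simp [hxy, mul_comm]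

lemma addV_self (n : ℕ) (x : Fin n → ZMod 2) : x + x = 0 := by
  funext i; exact (by decide : ∀ c : ZMod 2, c + c = 0) _

lemma addV_cancel_left (n : ℕ) (x y : Fin n → ZMod 2) : x + (x + y) = y := by
  rw [← add_assoc, addV_self, zero_add]

lemma addV_eq_zero_iff' (n : ℕ) (x y : Fin n → ZMod 2) : x + y = 0 ↔ y = x := by
  have h2 : ∀ u v : ZMod 2, u + v = 0 ↔ v = u := by decide
  constructor
  · intro h; funext i; exact (h2 _ _).mp (congrFun h i)
  · rintro rfl
    funext i; exact (h2 _ _).mpr rfl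

lemma cardV (n : ℕ) : Fintype.card (Fin n → ZMod 2) = 2 ^ n := by
  simp [Fintype.card_fun]

lemma count_pairs (n : ℕ) (D : (Fin n → ZMod 2) → (Fin n → ZMod 2))
    (h2 : ∀ b, (univ.filter fun x => D x = b).card ≤ 2)
    (hne1 : ∀ b, (univ.filter fun x => D x = b).card ≠ 1) :
    (univ.filter fun p : (Fin n → ZMod 2) × (Fin n → ZMod 2) => D p.1 = D p.2).card
      = 2 ^ (n + 1) := by
  set s := univ.filter fun p : (Fin n → ZMod 2) × (Fin n → ZMod 2) => D p.1 = D p.2 with hs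
  have step1 : s.card = ∑ b : Fin n → ZMod 2, (s.filter fun p => D p.1 = b).card :=
    Finset.card_eq_sum_card_fiberwise (fun p _ => Finset.mem_univ _)
  have step2 : ∀ b : Fin n → ZMod 2, (s.filter fun p => D p.1 = b)
      = (univ.filter fun x => D x = b) ×ˢ (univ.filter fun x => D x = b) := by
    intro b
    ext ⟨x, y⟩
    simp only [hs, Finset.mem_filter, Finset.mem_product, Finset.mem_univ, true_and,
      Finset.filter_filter]
    constructor
    · rintro ⟨h1, h2⟩; exact ⟨h2, h1 ▸ h2⟩
    · rintro ⟨h1, h2⟩; exact ⟨h1.trans h2.symm, h1⟩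
  have step3 : ∀ b : Fin n → ZMod 2,
      ((univ.filter fun x => D x = b).card) * ((univ.filter fun x => D x = b).card)
        = 2 * (univ.filter fun x => D x = b).card := by
    intro b
    have := h2 b
    have := hne1 b
    set k := (univ.filter fun x => D x = b).card
    interval_cases k <;> simp_all
  have step4 : s.card = 2 * ∑ b : Fin n → ZMod 2, (univ.filter fun x => D x = b).card := by
    rw [step1, Finset.mul_sum]
    refine Finset.sum_congr rfl fun b _ => ?_
    rw [step2 b, Finset.card_product, step3 b]
  have step5 : ∑ b : Fin n → ZMod 2, (univ.filter fun x => D x = b).card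
      = 2 ^ n := by
    rw [← Finset.card_eq_sum_card_fiberwise (f := D) (fun x _ => Finset.mem_univ _)]
    rw [Finset.card_univ, cardV]
  rw [step4, step5, pow_succ, mul_comm]

lemma walshB_eq (n : ℕ) (F : (Fin n → ZMod 2) → (Fin n → ZMod 2)) (b a : Fin n → ZMod 2) :
    walshB n F b a = ∑ x : Fin n → ZMod 2,
      chiB (∑ i, b i * F x i) * chiB (∑ i, a i * x i) := by
  simp [walshB, chiB, pow_add]

lemma parsevalB (n : ℕ) (F : (Fin n → ZMod 2) → (Fin n → ZMod 2)) (b : Fin n → ZMod 2) :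
    ∑ a : Fin n → ZMod 2, (walshB n F b a) ^ 2 = 2 ^ (2 * n) := by
  simp only [walshB_eq]
  rw [sum_sq_general n (fun x => chiB (∑ i, b i * F x i)) (fun x => x)]
  have : ∀ x y : Fin n → ZMod 2, (x + y = 0) ↔ (y = x) := fun x y =>
    addV_eq_zero_iff' n x y
  simp only [this]
  simp [chiB_mul_self, two_mul, pow_add, Finset.card_univ]

lemma walshB_sq_eq (n : ℕ) (F : (Fin n → ZMod 2) → (Fin n → ZMod 2)) (b a : Fin n → ZMod 2) :
    (walshB n F b a) ^ 2 = ∑ p : (Fin n → ZMod 2) × (Fin n → ZMod 2),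
      chiB (∑ i, b i * (F p.1 + F p.2) i) * chiB (∑ i, a i * (p.1 + p.2) i) := by
  rw [walshB_eq, sq, Finset.sum_mul_sum]
  rw [Fintype.sum_prod_type]
  refine Finset.sum_congr rfl fun x _ => Finset.sum_congr rfl fun y _ => ?_
  simp only [← dot_add, chiB_add]
  ring

lemma fourth_moment (n : ℕ) (F : (Fin n → ZMod 2) → (Fin n → ZMod 2)) :
    ∑ b : Fin n → ZMod 2, ∑ a : Fin n → ZMod 2, (walshB n F b a) ^ 4
      = 2 ^ (2 * n) *
        ((univ.filter fun pq : ((Fin n → ZMod 2) × (Fin n → ZMod 2)) ×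
            ((Fin n → ZMod 2) × (Fin n → ZMod 2)) =>
          (pq.1.1 + pq.1.2) + (pq.2.1 + pq.2.2) = 0 ∧
          (F pq.1.1 + F pq.1.2) + (F pq.2.1 + F pq.2.2) = 0).card : ℤ) := by
  have h4 : ∀ b a : Fin n → ZMod 2, (walshB n F b a) ^ 4 = ((walshB n F b a) ^ 2) ^ 2 := by
    intro b a; ring
  calc ∑ b : Fin n → ZMod 2, ∑ a : Fin n → ZMod 2, (walshB n F b a) ^ 4
      = ∑ b : Fin n → ZMod 2, (2 ^ n *
          ∑ p : (Fin n → ZMod 2) × (Fin n → ZMod 2),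
          ∑ q : (Fin n → ZMod 2) × (Fin n → ZMod 2),
            (if (p.1 + p.2) + (q.1 + q.2) = 0 then
              chiB (∑ i, b i * (F p.1 + F p.2) i) * chiB (∑ i, b i * (F q.1 + F q.2) i)
             else 0)) := by
        refine Finset.sum_congr rfl fun b _ => ?_
        simp only [h4 b, walshB_sq_eq]
        have key := sum_sq_general n (fun p : (Fin n → ZMod 2) × (Fin n → ZMod 2) =>
            chiB (∑ i, b i * (F p.1 + F p.2) i)) (fun p => p.1 + p.2)
        rw [key]
    _ = 2 ^ n * ∑ p : (Fin n → ZMod 2) × (Fin n → ZMod 2),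
          ∑ q : (Fin n → ZMod 2) × (Fin n → ZMod 2),
          (if (p.1 + p.2) + (q.1 + q.2) = 0 then
            (if (F p.1 + F p.2) + (F q.1 + F q.2) = 0 then (2:ℤ) ^ n else 0) else 0) := by
        rw [← Finset.mul_sum, Finset.sum_comm]
        congr 1
        refine Finset.sum_congr rfl fun p _ => ?_
        rw [Finset.sum_comm]
        refine Finset.sum_congr rfl fun q _ => ?_
        by_cases hc : (p.1 + p.2) + (q.1 + q.2) = 0
        · simp only [hc, if_true]
          have key : ∀ b : Fin n → ZMod 2,
              chiB (∑ i, b i * (F p.1 + F p.2) i) * chiB (∑ i, b i * (F q.1 + F q.2) i)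
                = chiB (∑ i, b i * ((F p.1 + F p.2) + (F q.1 + F q.2)) i) := by
            intro b
            rw [← dot_add n b (F p.1 + F p.2) (F q.1 + F q.2), chiB_add]
          simp only [key]
          exact sum_chiB_dot n _
        · simp [hc]
    _ = 2 ^ (2 * n) *
        ((univ.filter fun pq : ((Fin n → ZMod 2) × (Fin n → ZMod 2)) ×
            ((Fin n → ZMod 2) × (Fin n → ZMod 2)) =>
          (pq.1.1 + pq.1.2) + (pq.2.1 + pq.2.2) = 0 ∧
          (F pq.1.1 + F pq.1.2) + (F pq.2.1 + F pq.2.2) = 0).card : ℤ) := by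
        rw [Finset.card_filter]
        push_cast
        rw [two_mul, pow_add, mul_assoc]
        congr 1
        conv_rhs => rw [Fintype.sum_prod_type]
        rw [Finset.mul_sum]
        refine Finset.sum_congr rfl fun p _ => ?_
        rw [Finset.mul_sum]
        refine Finset.sum_congr rfl fun q _ => ?_
        by_cases h1 : (p.1 + p.2) + (q.1 + q.2) = 0 <;>
          by_cases h2 : (F p.1 + F p.2) + (F q.1 + F q.2) = 0 <;>
          simp [h1, h2]

lemma fiber_ne_one (n : ℕ) (F : (Fin n → ZMod 2) → (Fin n → ZMod 2))
    (a : Fin n → ZMod 2) (ha : a ≠ 0) (b : Fin n → ZMod 2) :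
    (univ.filter fun x => F (x + a) + F x = b).card ≠ 1 := by
  intro h1
  obtain ⟨c, hc⟩ := Finset.card_eq_one.mp h1
  have hcmem : c ∈ univ.filter fun x => F (x + a) + F x = b := by
    rw [hc]; exact Finset.mem_singleton_self c
  have hcc : F (c + a) + F c = b := (Finset.mem_filter.mp hcmem).2
  have hmem2 : c + a ∈ univ.filter fun x => F (x + a) + F x = b := by
    refine Finset.mem_filter.mpr ⟨Finset.mem_univ _, ?_⟩
    have : c + a + a = c := by rw [add_assoc, addV_self, add_zero]
    rw [this, ← hcc, add_comm]
  rw [hc, Finset.mem_singleton] at hmem2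
  have : a = 0 := by
    have h := congrArg (fun z => c + z) hmem2
    rw [addV_cancel_left] at h
    rw [h, addV_self]
  exact ha this

lemma quad_count (n : ℕ) (F : (Fin n → ZMod 2) → (Fin n → ZMod 2)) (hapn : IsAPNB n F) :
    (univ.filter fun pq : ((Fin n → ZMod 2) × (Fin n → ZMod 2)) ×
        ((Fin n → ZMod 2) × (Fin n → ZMod 2)) =>
      (pq.1.1 + pq.1.2) + (pq.2.1 + pq.2.2) = 0 ∧
      (F pq.1.1 + F pq.1.2) + (F pq.2.1 + F pq.2.2) = 0).card
    = ∑ a : Fin n → ZMod 2, (if a = 0 then 2 ^ (2 * n) else 2 ^ (n + 1)) := by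
  have stepA : (univ.filter fun pq : ((Fin n → ZMod 2) × (Fin n → ZMod 2)) ×
        ((Fin n → ZMod 2) × (Fin n → ZMod 2)) =>
      (pq.1.1 + pq.1.2) + (pq.2.1 + pq.2.2) = 0 ∧
      (F pq.1.1 + F pq.1.2) + (F pq.2.1 + F pq.2.2) = 0).card
      = (univ.filter fun t : (Fin n → ZMod 2) × ((Fin n → ZMod 2) × (Fin n → ZMod 2)) =>
          F (t.2.1 + t.1) + F t.2.1 = F (t.2.2 + t.1) + F t.2.2).card := by
    refine Finset.card_nbij' (fun pq => (pq.1.1 + pq.1.2, (pq.1.1, pq.2.1)))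
      (fun t => ((t.2.1, t.2.1 + t.1), (t.2.2, t.2.2 + t.1))) ?_ ?_ ?_ ?_
    · rintro ⟨⟨x, x2⟩, ⟨y, y2⟩⟩ hmem
      obtain ⟨-, hsum, hF⟩ := Finset.mem_filter.mp hmem
      refine Finset.mem_filter.mpr ⟨Finset.mem_univ _, ?_⟩
      simp only
      have hyy : y + y2 = x + x2 := (addV_eq_zero_iff' n _ _).mp hsum
      have hFe : F y + F y2 = F x + F x2 := (addV_eq_zero_iff' n _ _).mp hF
      rw [addV_cancel_left, ← hyy, addV_cancel_left]
      rw [add_comm (F x2) (F x), add_comm (F y2) (F y)]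
      exact hFe.symm
    · rintro ⟨a, x, y⟩ hmem
      have hcond := (Finset.mem_filter.mp hmem).2
      simp only at hcond
      refine Finset.mem_filter.mpr ⟨Finset.mem_univ _, ?_, ?_⟩
      · simp only
        rw [addV_cancel_left, addV_cancel_left, addV_self]
      · simp only
        rw [add_comm (F x), add_comm (F y), hcond, addV_self]
    · rintro ⟨⟨x, x2⟩, ⟨y, y2⟩⟩ hmem
      obtain ⟨-, hsum, -⟩ := Finset.mem_filter.mp hmem
      have hyy : y + y2 = x + x2 := (addV_eq_zero_iff' n _ _).mp hsum
      have h1 : x + (x + x2) = x2 := addV_cancel_left n x x2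
      have h2 : y + (x + x2) = y2 := by rw [← hyy]; exact addV_cancel_left n y y2
      simp only
      rw [h1, h2]
    · rintro ⟨a, x, y⟩ _
      simp only
      rw [addV_cancel_left]
  rw [stepA]
  have stepB : (univ.filter fun t : (Fin n → ZMod 2) × ((Fin n → ZMod 2) × (Fin n → ZMod 2)) =>
          F (t.2.1 + t.1) + F t.2.1 = F (t.2.2 + t.1) + F t.2.2).card
      = ∑ a : Fin n → ZMod 2, (univ.filter fun p : (Fin n → ZMod 2) × (Fin n → ZMod 2) =>
          F (p.1 + a) + F p.1 = F (p.2 + a) + F p.2).card := by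
    rw [Finset.card_filter, Fintype.sum_prod_type]
    refine Finset.sum_congr rfl fun a _ => ?_
    rw [Finset.card_filter]
  rw [stepB]
  refine Finset.sum_congr rfl fun a _ => ?_
  by_cases ha : a = 0
  · subst ha
    rw [if_pos rfl]
    have : (univ.filter fun p : (Fin n → ZMod 2) × (Fin n → ZMod 2) =>
        F (p.1 + 0) + F p.1 = F (p.2 + 0) + F p.2) = univ := by
      refine Finset.filter_true_of_mem fun p _ => ?_
      rw [add_zero, add_zero, addV_self, addV_self]
    rw [this, Finset.card_univ, Fintype.card_prod, cardV, two_mul, pow_add]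
  · rw [if_neg ha]
    exact count_pairs n (fun x => F (x + a) + F x) (hapn a ha) (fiber_ne_one n F a ha)

lemma walshB_zero_left (n : ℕ) (F : (Fin n → ZMod 2) → (Fin n → ZMod 2))
    (a : Fin n → ZMod 2) :
    walshB n F 0 a = if a = 0 then 2 ^ n else 0 := by
  rw [walshB_eq]
  have h1 : ∀ x : Fin n → ZMod 2, chiB (∑ i, (0 : Fin n → ZMod 2) i * F x i) = 1 := by
    intro x; simp [chiB]
  have h2 : ∀ x : Fin n → ZMod 2, (∑ i, a i * x i) = ∑ i, x i * a i := by
    intro x; exact Finset.sum_congr rfl fun i _ => mul_comm _ _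
  calc ∑ x : Fin n → ZMod 2, chiB (∑ i, (0:Fin n → ZMod 2) i * F x i) * chiB (∑ i, a i * x i)
      = ∑ x : Fin n → ZMod 2, chiB (∑ i, x i * a i) := by
        refine Finset.sum_congr rfl fun x _ => ?_
        rw [h1 x, h2 x, one_mul]
    _ = if a = 0 then 2 ^ n else 0 := sum_chiB_dot n a

lemma sum_pow4_of_plateaued (n : ℕ) (F : (Fin n → ZMod 2) → (Fin n → ZMod 2))
    (b : Fin n → ZMod 2) (t : ℕ) (ht : IsTPlateauedB n F b t) :
    ∑ a : Fin n → ZMod 2, (walshB n F b a) ^ 4 = 2 ^ (3 * n + t) := by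
  have key : ∀ a : Fin n → ZMod 2,
      (walshB n F b a) ^ 4 = 2 ^ (n + t) * (walshB n F b a) ^ 2 := by
    intro a
    rcases ht a with h | h
    · rw [h]; ring
    · rw [← h]; ring
  rw [Finset.sum_congr rfl fun a _ => key a, ← Finset.mul_sum, parsevalB, ← pow_add]
  congr 1
  ring

lemma even_of_plateaued (n : ℕ) (F : (Fin n → ZMod 2) → (Fin n → ZMod 2))
    (b : Fin n → ZMod 2) (t : ℕ) (ht : IsTPlateauedB n F b t) : Even (n + t) := by
  have hex : ∃ a : Fin n → ZMod 2, walshB n F b a ≠ 0 := by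
    by_contra h
    push_neg at h
    have hz : ∑ a : Fin n → ZMod 2, (walshB n F b a) ^ 2 = 0 :=
      Finset.sum_eq_zero (fun a _ => by rw [h a]; ring)
    have := parsevalB n F b
    rw [hz] at this
    exact absurd this.symm ((by positivity : (0:ℤ) < 2 ^ (2*n)).ne')
  obtain ⟨a, ha⟩ := hex
  have hsq : (walshB n F b a) ^ 2 = 2 ^ (n + t) := (ht a).resolve_left ha
  have hnat : (walshB n F b a).natAbs ^ 2 = 2 ^ (n + t) := by
    have := congrArg Int.natAbs hsq
    simpa [Int.natAbs_pow] using this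
  set k := (walshB n F b a).natAbs
  have hdvd : k ∣ 2 ^ (n + t) := hnat ▸ dvd_pow_self k (by norm_num)
  obtain ⟨m, hm, hk⟩ := (Nat.dvd_prime_pow Nat.prime_two).mp hdvd
  have : 2 ^ (2 * m) = 2 ^ (n + t) := by
    calc (2:ℕ) ^ (2 * m) = (2 ^ m) ^ 2 := by rw [← pow_mul, mul_comm]
    _ = 2 ^ (n + t) := by rw [← hk, hnat]
  have h2m : 2 * m = n + t := Nat.pow_right_injective (le_refl 2) this
  exact ⟨m, by omega⟩

lemma t_zero_of_bent (n : ℕ) (F : (Fin n → ZMod 2) → (Fin n → ZMod 2))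
    (b : Fin n → ZMod 2) (t : ℕ) (ht : IsTPlateauedB n F b t)
    (hbent : IsBentB n F b) : t = 0 := by
  have h0 : (walshB n F b 0) ^ 2 = 2 ^ n := hbent 0
  have hne : walshB n F b 0 ≠ 0 := by
    intro h; rw [h] at h0; simp at h0
    exact absurd h0.symm (by positivity)
  have := (ht 0).resolve_left hne
  rw [h0] at this
  have : (2:ℤ) ^ n = 2 ^ (n + t) := this
  have hnat : n = n + t := by
    have h2 : ((2:ℤ))^n = 2^(n+t) := this
    have := congrArg Int.natAbs h2
    simp only [Int.natAbs_pow] at this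
    norm_num at this
    exact Nat.pow_right_injective (le_refl 2) (by simpa using this)
  omega

lemma bent_of_t_zero (n : ℕ) (F : (Fin n → ZMod 2) → (Fin n → ZMod 2))
    (b : Fin n → ZMod 2) (ht : IsTPlateauedB n F b 0) : IsBentB n F b := by
  have hle : ∀ a : Fin n → ZMod 2, (walshB n F b a) ^ 2 ≤ 2 ^ n := by
    intro a
    rcases ht a with h | h
    · rw [h]; positivity
    · rw [add_zero] at h; rw [h]
  have hsum : ∑ a : Fin n → ZMod 2, (walshB n F b a) ^ 2
      = ∑ a : Fin n → ZMod 2, (2:ℤ) ^ n := by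
    rw [parsevalB, Finset.sum_const, Finset.card_univ]
    have : Fintype.card (Fin n → ZMod 2) = 2 ^ n := by simp [Fintype.card_fun]
    rw [this, two_mul, pow_add]
    simp [nsmul_eq_mul]
  intro a
  by_contra hne
  have hzero : walshB n F b a = 0 := by
    rcases ht a with h | h
    · exact h
    · rw [add_zero] at h; exact absurd h hne
  have hlt : ∑ x : Fin n → ZMod 2, (walshB n F b x) ^ 2
      < ∑ x : Fin n → ZMod 2, (2:ℤ) ^ n := by
    refine Finset.sum_lt_sum (fun i _ => hle i) ⟨a, Finset.mem_univ a, ?_⟩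
    rw [hzero]
    positivity
  rw [hsum] at hlt
  exact lt_irrefl _ hlt

theorem plateaued_apn_bent_count_mod_four (n : ℕ) (hn : 0 < n) (hne : Even n)
    (F : (Fin n → ZMod 2) → (Fin n → ZMod 2))
    (hplat : IsPlateauedB n F) (hapn : IsAPNB n F) :
    (univ.filter fun b : Fin n → ZMod 2 => b ≠ 0 ∧ IsBentB n F b).card % 4 = 2 := by
  classical
  obtain ⟨t, ht⟩ : ∃ t : (Fin n → ZMod 2) → ℕ,
      ∀ b, b ≠ 0 → IsTPlateauedB n F b (t b) := by
    refine ⟨fun b => if hb : b ≠ 0 then Classical.choose (hplat b hb) else 0, ?_⟩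
    intro b hb
    simp only [dif_pos hb]
    exact Classical.choose_spec (hplat b hb)
  set S : Finset (Fin n → ZMod 2) := univ.filter (fun b => b ≠ 0) with hS
  -- step 1: the quadruple count evaluation in ℤ
  have hquadZ : ((univ.filter fun pq : ((Fin n → ZMod 2) × (Fin n → ZMod 2)) ×
        ((Fin n → ZMod 2) × (Fin n → ZMod 2)) =>
      (pq.1.1 + pq.1.2) + (pq.2.1 + pq.2.2) = 0 ∧
      (F pq.1.1 + F pq.1.2) + (F pq.2.1 + F pq.2.2) = 0).card : ℤ)
      = 3 * 2 ^ (2 * n) - 2 ^ (n + 1) := by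
    rw [quad_count n F hapn]
    push_cast
    have key : ∀ a : Fin n → ZMod 2, (if a = 0 then (2:ℤ) ^ (2 * n) else 2 ^ (n + 1))
        = 2 ^ (n + 1) + (if a = 0 then (2:ℤ) ^ (2 * n) - 2 ^ (n + 1) else 0) := by
      intro a; split <;> ring
    rw [Finset.sum_congr rfl fun a _ => key a, Finset.sum_add_distrib,
      Finset.sum_const, Finset.sum_ite_eq' univ (0 : Fin n → ZMod 2), Finset.card_univ]
    have hcV : Fintype.card (Fin n → ZMod 2) = 2 ^ n := by simp [Fintype.card_fun]
    rw [hcV]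
    simp only [Finset.mem_univ, if_true, nsmul_eq_mul]
    push_cast
    rw [two_mul, pow_add, pow_add]
    ring
  -- step 2: split b = 0 off the fourth moment
  have hzero4 : ∑ a : Fin n → ZMod 2, (walshB n F 0 a) ^ 4 = 2 ^ (4 * n) := by
    have key : ∀ a : Fin n → ZMod 2, (walshB n F 0 a) ^ 4
        = if a = 0 then (2:ℤ) ^ (4 * n) else 0 := by
      intro a
      rw [walshB_zero_left]
      split
      · rw [← pow_mul]; ring_nf
      · ring
    rw [Finset.sum_congr rfl fun a _ => key a, Finset.sum_ite_eq' univ (0 : Fin n → ZMod 2)]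
    simp
  have hsplit : ∑ b : Fin n → ZMod 2, ∑ a : Fin n → ZMod 2, (walshB n F b a) ^ 4
      = 2 ^ (4 * n) + ∑ b ∈ S, (2:ℤ) ^ (3 * n + t b) := by
    rw [← Finset.sum_filter_add_sum_filter_not univ (fun b => b = 0)
      (fun b => ∑ a : Fin n → ZMod 2, (walshB n F b a) ^ 4)]
    congr 1
    · rw [Finset.filter_eq' univ (0 : Fin n → ZMod 2)]
      simp only [Finset.mem_univ, if_true, Finset.sum_singleton]
      exact hzero4
    · refine Finset.sum_congr rfl fun b hb => ?_
      have hbne : b ≠ 0 := (Finset.mem_filter.mp hb).2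
      exact sum_pow4_of_plateaued n F b (t b) (ht b hbne)
  -- step 3: the key identity
  have hkey : ∑ b ∈ S, (2:ℤ) ^ (t b) = 2 ^ (n + 1) - 2 := by
    have h1 : 2 ^ (4 * n) + ∑ b ∈ S, (2:ℤ) ^ (3 * n + t b)
        = 2 ^ (2 * n) * (3 * 2 ^ (2 * n) - 2 ^ (n + 1)) := by
      rw [← hsplit, fourth_moment n F, hquadZ]
    have h2 : ∑ b ∈ S, (2:ℤ) ^ (3 * n + t b)
        = 2 ^ (3 * n) * ∑ b ∈ S, (2:ℤ) ^ (t b) := by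
      rw [Finset.mul_sum]
      exact Finset.sum_congr rfl fun b _ => by rw [pow_add]
    rw [h2] at h1
    have h3 : (2:ℤ) ^ (2 * n) * (3 * 2 ^ (2 * n) - 2 ^ (n + 1))
        = 2 ^ (4 * n) + 2 ^ (3 * n) * (2 ^ (n + 1) - 2) := by
      simp only [show 4 * n = n + n + (n + n) by ring, show 3 * n = n + (n + n) by ring,
        show 2 * n = n + n by ring, pow_add, pow_one]
      ring
    rw [h3] at h1
    have h4 := add_left_cancel h1
    exact mul_left_cancel₀ (by positivity : (2:ℤ) ^ (3*n) ≠ 0) h4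
  -- step 4: split S into bent / non-bent
  have hfil : S.filter (fun b => IsBentB n F b)
      = univ.filter fun b : Fin n → ZMod 2 => b ≠ 0 ∧ IsBentB n F b := by
    rw [hS, Finset.filter_filter]
  have hbentsum : ∑ b ∈ S.filter (fun b => IsBentB n F b), (2:ℤ) ^ (t b)
      = ((S.filter (fun b => IsBentB n F b)).card : ℤ) := by
    rw [Finset.card_eq_sum_ones]
    push_cast
    refine Finset.sum_congr rfl fun b hb => ?_
    obtain ⟨hbS, hbent⟩ := Finset.mem_filter.mp hb
    have hbne : b ≠ 0 := (Finset.mem_filter.mp hbS).2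
    rw [t_zero_of_bent n F b (t b) (ht b hbne) hbent, pow_zero]
  have hdvd : (4:ℤ) ∣ ∑ b ∈ S.filter (fun b => ¬ IsBentB n F b), (2:ℤ) ^ (t b) := by
    refine Finset.dvd_sum fun b hb => ?_
    obtain ⟨hbS, hnb⟩ := Finset.mem_filter.mp hb
    have hbne : b ≠ 0 := (Finset.mem_filter.mp hbS).2
    have heven : Even (t b) := by
      have h1 := even_of_plateaued n F b (t b) (ht b hbne)
      obtain ⟨k, hk⟩ := h1
      obtain ⟨m, hm⟩ := hne
      exact ⟨k - m, by omega⟩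
    have htne : t b ≠ 0 := by
      intro h0
      exact hnb (bent_of_t_zero n F b (h0 ▸ ht b hbne))
    have h2le : 2 ≤ t b := by
      obtain ⟨k, hk⟩ := heven; omega
    calc (4:ℤ) = 2 ^ 2 := by norm_num
    _ ∣ 2 ^ (t b) := pow_dvd_pow 2 h2le
  obtain ⟨K, hK⟩ := hdvd
  have hsplit2 : ∑ b ∈ S, (2:ℤ) ^ (t b)
      = ((S.filter (fun b => IsBentB n F b)).card : ℤ) + 4 * K := by
    rw [← Finset.sum_filter_add_sum_filter_not S (fun b => IsBentB n F b), hbentsum, hK]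
  -- conclude
  rw [hkey] at hsplit2
  have h2n : 2 ≤ n := by
    obtain ⟨m, hm⟩ := hne; omega
  have hpow : (2:ℤ) ^ (n + 1) = 4 * 2 ^ (n - 1) := by
    rw [show n + 1 = (n - 1) + 2 by omega, pow_add]; ring
  rw [hpow] at hsplit2
  have hCpos : (0:ℤ) ≤ 2 ^ (n - 1) := by positivity
  set C : ℤ := 2 ^ (n - 1)
  rw [← hfil]
  set N : ℕ := (S.filter (fun b => IsBentB n F b)).card
  omega
end

section
/- Let n be an even positive integer and F : 𝔽_2^n → 𝔽_2^n a plateaued APN function whose image has size |im(F)| = (2^n + 2)/3. Then no nonzero component of F is balanced, i.e., W_F(b,0) ≠ 0 for every b ∈ 𝔽_2^n with b ≠ 0. -/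
open Finset

def chiZ (v : ZMod 2) : ℤ := (-1) ^ v.val

lemma chiZ_add : ∀ u v : ZMod 2, chiZ (u + v) = chiZ u * chiZ v := by decide

lemma chiZ_zero : chiZ 0 = 1 := rfl

lemma ne_zero_eq_one : ∀ v : ZMod 2, v ≠ 0 → v = 1 := by decide

lemma ortho (n : ℕ) (u : Fin n → ZMod 2) :
    ∑ b : Fin n → ZMod 2, chiZ (∑ i, b i * u i) = if u = 0 then 2 ^ n else 0 := by
  split_ifs with h
  · subst h
    have h1 : ∀ b : Fin n → ZMod 2, chiZ (∑ i, b i * (0 : Fin n → ZMod 2) i) = 1 := by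
      intro b; simp [chiZ]
    rw [Finset.sum_congr rfl fun b _ => h1 b]
    simp [Fintype.card_fun]
  · obtain ⟨i0, hi0⟩ := Function.ne_iff.mp h
    have hu1 : u i0 = 1 := ne_zero_eq_one _ hi0
    set δ : Fin n → ZMod 2 := Pi.single i0 1 with hδ
    have key : ∀ b : Fin n → ZMod 2,
        chiZ (∑ i, (b + δ) i * u i) = - chiZ (∑ i, b i * u i) := by
      intro b
      have h1 : (∑ i, (b + δ) i * u i) = (∑ i, b i * u i) + (∑ i, δ i * u i) := by
        rw [← Finset.sum_add_distrib]
        exact Finset.sum_congr rfl fun i _ => by simp [add_mul]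
      have h2 : (∑ i, δ i * u i) = 1 := by
        rw [Finset.sum_eq_single i0]
        · simp [hδ, hu1]
        · intro i _ hi; simp [hδ, Pi.single_eq_of_ne hi]
        · simp
      rw [h1, h2, chiZ_add]
      have : chiZ 1 = -1 := rfl
      rw [this]; ring
    have hbij : ∑ b : Fin n → ZMod 2, chiZ (∑ i, (b + δ) i * u i)
        = ∑ b : Fin n → ZMod 2, chiZ (∑ i, b i * u i) :=
      Fintype.sum_equiv (Equiv.addRight δ) _ _ (fun b => rfl)
    have h0 : (∑ b : Fin n → ZMod 2, chiZ (∑ i, b i * u i))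
        + (∑ b : Fin n → ZMod 2, chiZ (∑ i, b i * u i)) = 0 := by
      nth_rewrite 1 [← hbij]
      rw [← Finset.sum_add_distrib]
      have hz : ∀ b : Fin n → ZMod 2,
          chiZ (∑ i, (b + δ) i * u i) + chiZ (∑ i, b i * u i) = 0 := by
        intro b; rw [key b]; ring
      rw [Finset.sum_congr rfl fun b _ => hz b]
      simp
    linarith

lemma ortho' (n : ℕ) (u : Fin n → ZMod 2) :
    ∑ x : Fin n → ZMod 2, chiZ (∑ i, u i * x i) = if u = 0 then 2 ^ n else 0 := by
  rw [Finset.sum_congr rfl fun x _ => by rw [Finset.sum_congr rfl fun i _ => mul_comm (u i) (x i)]]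
  exact ortho n u

section
variable {n : ℕ} {F : (Fin n → ZMod 2) → (Fin n → ZMod 2)}

lemma pv_add_eq_zero (u v : Fin n → ZMod 2) : u + v = 0 ↔ u = v := by
  have hz : ∀ a b : ZMod 2, a + b = 0 ↔ a = b := by decide
  constructor
  · intro h; funext i; exact (hz _ _).mp (congrFun h i)
  · rintro rfl; funext i; exact (hz _ _).mpr rfl
lemma walsh_expand (b a : Fin n → ZMod 2) :
    walshB n F b a = ∑ x, chiZ (∑ i, b i * F x i) * chiZ (∑ i, a i * x i) := by
  unfold walshB chiZ
  exact Finset.sum_congr rfl fun x _ => pow_add _ _ _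
lemma walsh_zero_right (b : Fin n → ZMod 2) :
    walshB n F b 0 = ∑ x, chiZ (∑ i, b i * F x i) := by
  rw [walsh_expand]
  refine Finset.sum_congr rfl fun x _ => ?_
  have h : (∑ i, (0 : Fin n → ZMod 2) i * x i) = 0 := by simp
  rw [h, chiZ_zero, mul_one]
lemma chiZ_dot_mul (c u v : Fin n → ZMod 2) :
    chiZ (∑ i, c i * u i) * chiZ (∑ i, c i * v i) = chiZ (∑ i, c i * (u + v) i) := by
  rw [← chiZ_add]; congr 1
  rw [← Finset.sum_add_distrib]
  exact Finset.sum_congr rfl fun i _ => by simp [mul_add]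
lemma L4 : ∑ b : Fin n → ZMod 2, (walshB n F b 0) ^ 2
    = 2 ^ n * ∑ x : Fin n → ZMod 2, ∑ y : Fin n → ZMod 2,
      (if F x = F y then (1 : ℤ) else 0) := by
  have h1 : ∀ b : Fin n → ZMod 2, (walshB n F b 0) ^ 2
      = ∑ x : Fin n → ZMod 2, ∑ y : Fin n → ZMod 2, chiZ (∑ i, b i * (F x + F y) i) := by
    intro b
    rw [walsh_zero_right, sq, Finset.sum_mul_sum]
    exact Finset.sum_congr rfl fun x _ => Finset.sum_congr rfl fun y _ => chiZ_dot_mul _ _ _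
  rw [Finset.sum_congr rfl fun b _ => h1 b, Finset.sum_comm]
  rw [Finset.mul_sum]
  refine Finset.sum_congr rfl fun x _ => ?_
  rw [Finset.sum_comm, Finset.mul_sum]
  refine Finset.sum_congr rfl fun y _ => ?_
  rw [ortho n (F x + F y)]
  by_cases h : F x = F y
  · rw [if_pos ((pv_add_eq_zero _ _).mpr h), if_pos h, mul_one]
  · rw [if_neg (fun hc => h ((pv_add_eq_zero _ _).mp hc)), if_neg h, mul_zero]
lemma parseval (b : Fin n → ZMod 2) :
    ∑ a : Fin n → ZMod 2, (walshB n F b a) ^ 2 = 2 ^ n * 2 ^ n := by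
  have h1 : ∀ a : Fin n → ZMod 2, (walshB n F b a) ^ 2
      = ∑ x : Fin n → ZMod 2, ∑ y : Fin n → ZMod 2,
          chiZ (∑ i, b i * (F x + F y) i) * chiZ (∑ i, a i * (x + y) i) := by
    intro a
    rw [walsh_expand, sq, Finset.sum_mul_sum]
    refine Finset.sum_congr rfl fun x _ => Finset.sum_congr rfl fun y _ => ?_
    rw [mul_mul_mul_comm, chiZ_dot_mul, chiZ_dot_mul]
  rw [Finset.sum_congr rfl fun a _ => h1 a, Finset.sum_comm]
  have h2 : ∀ x : Fin n → ZMod 2,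
      (∑ a : Fin n → ZMod 2, ∑ y : Fin n → ZMod 2,
        chiZ (∑ i, b i * (F x + F y) i) * chiZ (∑ i, a i * (x + y) i)) = 2 ^ n := by
    intro x
    rw [Finset.sum_comm]
    have h3 : ∀ y : Fin n → ZMod 2,
        (∑ a : Fin n → ZMod 2,
          chiZ (∑ i, b i * (F x + F y) i) * chiZ (∑ i, a i * (x + y) i))
        = chiZ (∑ i, b i * (F x + F y) i) * (if x + y = 0 then (2:ℤ) ^ n else 0) := by
      intro y
      rw [← Finset.mul_sum, ortho n (x + y)]
    rw [Finset.sum_congr rfl fun y _ => h3 y]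
    have h4 : ∀ y : Fin n → ZMod 2,
        chiZ (∑ i, b i * (F x + F y) i) * (if x + y = 0 then (2:ℤ) ^ n else 0)
        = if y = x then (2:ℤ)^n else 0 := by
      intro y
      by_cases h : y = x
      · subst h
        have hy : y + y = (0 : Fin n → ZMod 2) := (pv_add_eq_zero _ _).mpr rfl
        have hFy : F y + F y = (0 : Fin n → ZMod 2) := (pv_add_eq_zero _ _).mpr rfl
        rw [if_pos hy, if_pos rfl, hFy]
        have : (∑ i, b i * (0 : Fin n → ZMod 2) i) = 0 := by simp
        rw [this, chiZ_zero, one_mul]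
      · have hxy : x + y ≠ 0 := fun hc => h ((pv_add_eq_zero _ _).mp hc).symm
        rw [if_neg hxy, if_neg h, mul_zero]
    rw [Finset.sum_congr rfl fun y _ => h4 y, Finset.sum_ite_eq' univ x (fun _ => (2:ℤ)^n)]
    simp
  rw [Finset.sum_congr rfl fun x _ => h2 x, Finset.sum_const, Finset.card_univ]
  simp [Fintype.card_fun]
def quadC (n : ℕ) (F : (Fin n → ZMod 2) → (Fin n → ZMod 2)) : ℤ :=
  ∑ x : Fin n → ZMod 2, ∑ y : Fin n → ZMod 2, ∑ z : Fin n → ZMod 2,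
    (if (F x + F y) + (F z + F (x + y + z)) = 0 then (1 : ℤ) else 0)
lemma walsh_sq_expand (b a : Fin n → ZMod 2) :
    (walshB n F b a) ^ 2 = ∑ p : (Fin n → ZMod 2) × (Fin n → ZMod 2),
      chiZ (∑ i, b i * (F p.1 + F p.2) i) * chiZ (∑ i, a i * (p.1 + p.2) i) := by
  rw [Fintype.sum_prod_type, sq, walsh_expand, Finset.sum_mul_sum]
  refine Finset.sum_congr rfl fun x _ => Finset.sum_congr rfl fun y _ => ?_
  rw [mul_mul_mul_comm, chiZ_dot_mul, chiZ_dot_mul]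
lemma walsh_pow4_expand (b a : Fin n → ZMod 2) :
    (walshB n F b a) ^ 4
    = ∑ r : ((Fin n → ZMod 2) × (Fin n → ZMod 2)) × ((Fin n → ZMod 2) × (Fin n → ZMod 2)),
        chiZ (∑ i, b i * ((F r.1.1 + F r.1.2) + (F r.2.1 + F r.2.2)) i)
        * chiZ (∑ i, a i * ((r.1.1 + r.1.2) + (r.2.1 + r.2.2)) i) := by
  have h4 : (walshB n F b a) ^ 4 = ((walshB n F b a) ^ 2) ^ 2 := by ring
  rw [h4, Fintype.sum_prod_type, sq (((walshB n F b a)) ^ 2), walsh_sq_expand,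
    Finset.sum_mul_sum]
  refine Finset.sum_congr rfl fun p _ => Finset.sum_congr rfl fun q _ => ?_
  rw [mul_mul_mul_comm, chiZ_dot_mul, chiZ_dot_mul]
lemma L6eq : ∑ b : Fin n → ZMod 2, ∑ a : Fin n → ZMod 2, (walshB n F b a) ^ 4
    = 2 ^ n * 2 ^ n * quadC n F := by
  classical
  rw [Finset.sum_congr rfl fun b _ =>
    Finset.sum_congr rfl fun a _ => walsh_pow4_expand (F := F) b a]
  -- swap sums: b a r -> r b a
  rw [Finset.sum_congr rfl fun b _ => Finset.sum_comm, Finset.sum_comm]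
  -- per r, factor and apply orthogonality
  have hper : ∀ r : ((Fin n → ZMod 2) × (Fin n → ZMod 2)) × ((Fin n → ZMod 2) × (Fin n → ZMod 2)),
      (∑ b : Fin n → ZMod 2, ∑ a : Fin n → ZMod 2,
        chiZ (∑ i, b i * ((F r.1.1 + F r.1.2) + (F r.2.1 + F r.2.2)) i)
        * chiZ (∑ i, a i * ((r.1.1 + r.1.2) + (r.2.1 + r.2.2)) i))
      = 2 ^ n * 2 ^ n *
        (if ((F r.1.1 + F r.1.2) + (F r.2.1 + F r.2.2) = 0 ∧ (r.1.1 + r.1.2) + (r.2.1 + r.2.2) = 0)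
          then (1:ℤ) else 0) := by
    intro r
    rw [← Finset.sum_mul_sum, ortho n _, ortho n _]
    by_cases h1 : (F r.1.1 + F r.1.2) + (F r.2.1 + F r.2.2) = 0 <;>
      by_cases h2 : (r.1.1 + r.1.2) + (r.2.1 + r.2.2) = 0 <;>
      simp [h1, h2]
  rw [Finset.sum_congr rfl fun r _ => hper r, ← Finset.mul_sum]
  congr 1
  -- now the count over r equals quadC
  simp only [Fintype.sum_prod_type]
  unfold quadC
  refine Finset.sum_congr rfl fun x _ => Finset.sum_congr rfl fun y _ => ?_
  -- now: ∑ z ∑ w, [..] = ∑ z [..]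
  refine Finset.sum_congr rfl fun z _ => ?_
  have hsolve : ∀ w : Fin n → ZMod 2, ((x + y) + (z + w) = 0) ↔ w = x + y + z := by
    intro w
    have hz : ∀ a b c d : ZMod 2, ((a + b) + (c + d) = 0) ↔ d = a + b + c := by decide
    rw [funext_iff, funext_iff]
    exact forall_congr' fun i => hz _ _ _ _
  have hstep : ∀ w : Fin n → ZMod 2,
      (if ((F x + F y) + (F z + F w) = 0 ∧ (x + y) + (z + w) = 0) then (1:ℤ) else 0)
      = if w = x + y + z then
          (if (F x + F y) + (F z + F (x + y + z)) = 0 then (1:ℤ) else 0) else 0 := by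
    intro w
    by_cases hw : w = x + y + z
    · subst hw
      by_cases hF : (F x + F y) + (F z + F (x + y + z)) = 0
      · rw [if_pos ⟨hF, (hsolve _).mpr rfl⟩, if_pos rfl, if_pos hF]
      · rw [if_neg (fun hc => hF hc.1), if_pos rfl, if_neg hF]
    · rw [if_neg (fun hc => hw ((hsolve _).mp hc.2)), if_neg hw]
  rw [Finset.sum_congr rfl fun w _ => hstep w]
  rw [Finset.sum_ite_eq' univ (x + y + z)]
  simp
lemma quadC_le (hapn : IsAPNB n F) :
    quadC n F ≤ 2 ^ n * 2 ^ n + (2 ^ n - 1) * (2 ^ n * 2) := by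
  classical
  unfold quadC
  -- substitute y = x + u
  have hsub : ∀ x : Fin n → ZMod 2,
      (∑ y : Fin n → ZMod 2, ∑ z : Fin n → ZMod 2,
        (if (F x + F y) + (F z + F (x + y + z)) = 0 then (1:ℤ) else 0))
      = ∑ u : Fin n → ZMod 2, ∑ z : Fin n → ZMod 2,
        (if F (z + u) + F z = F (x + u) + F x then (1:ℤ) else 0) := by
    intro x
    refine (Fintype.sum_equiv (Equiv.addLeft x) _ _ fun u => ?_).symm
    have e1 : Equiv.addLeft x u = x + u := rfl
    rw [e1]
    refine Finset.sum_congr rfl fun z _ => ?_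
    have e2 : x + (x + u) + z = u + z := by
      funext i
      have : ∀ a b c : ZMod 2, a + (a + b) + c = b + c := by decide
      exact this _ _ _
    have hiff : ∀ A B C D : Fin n → ZMod 2, ((A + B) + (C + D) = 0) ↔ (D + C = B + A) := by
      intro A B C D
      have hz : ∀ a b c d : ZMod 2, ((a + b) + (c + d) = 0) ↔ (d + c = b + a) := by decide
      rw [funext_iff, funext_iff]
      exact forall_congr' fun i => hz _ _ _ _
    rw [e2, add_comm u z]
    congr 1
    exact propext ((hiff (F x) (F (x + u)) (F z) (F (z + u))).symm)
  rw [Finset.sum_congr rfl fun x _ => hsub x, Finset.sum_comm]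
  -- split off u = 0
  rw [← Finset.add_sum_erase univ _ (mem_univ (0 : Fin n → ZMod 2))]
  have h0 : (∑ x : Fin n → ZMod 2, ∑ z : Fin n → ZMod 2,
      (if F (z + 0) + F z = F (x + 0) + F x then (1:ℤ) else 0)) = 2 ^ n * 2 ^ n := by
    have : ∀ x z : Fin n → ZMod 2,
        (if F (z + 0) + F z = F (x + 0) + F x then (1:ℤ) else 0) = 1 := by
      intro x z
      have hAA : ∀ A B : Fin n → ZMod 2, A + A = B + B := by
        intro A B; funext i
        have : ∀ a b : ZMod 2, a + a = b + b := by decide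
        exact this _ _
      rw [if_pos (by rw [add_zero, add_zero]; exact hAA _ _)]
    rw [Finset.sum_congr rfl fun x _ => Finset.sum_congr rfl fun z _ => this x z]
    simp [Fintype.card_fun]
  rw [h0]
  gcongr
  have hbound : ∀ u ∈ univ.erase (0 : Fin n → ZMod 2),
      (∑ x : Fin n → ZMod 2, ∑ z : Fin n → ZMod 2,
        (if F (z + u) + F z = F (x + u) + F x then (1:ℤ) else 0)) ≤ 2 ^ n * 2 := by
    intro u hu
    have hu0 : u ≠ 0 := (Finset.mem_erase.mp hu).1
    have hx : ∀ x : Fin n → ZMod 2,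
        (∑ z : Fin n → ZMod 2,
          (if F (z + u) + F z = F (x + u) + F x then (1:ℤ) else 0)) ≤ 2 := by
      intro x
      rw [Finset.sum_boole]
      exact_mod_cast hapn u hu0 (F (x + u) + F x)
    calc (∑ x : Fin n → ZMod 2, ∑ z : Fin n → ZMod 2,
          (if F (z + u) + F z = F (x + u) + F x then (1:ℤ) else 0))
        ≤ ∑ _x : Fin n → ZMod 2, (2:ℤ) := Finset.sum_le_sum fun x _ => hx x
      _ = 2 ^ n * 2 := by simp [Fintype.card_fun]
  calc (∑ u ∈ univ.erase (0 : Fin n → ZMod 2), ∑ x : Fin n → ZMod 2, ∑ z : Fin n → ZMod 2,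
        (if F (z + u) + F z = F (x + u) + F x then (1:ℤ) else 0))
      ≤ ∑ _u ∈ univ.erase (0 : Fin n → ZMod 2), (2:ℤ) ^ n * 2 :=
        Finset.sum_le_sum hbound
    _ = (2 ^ n - 1) * (2 ^ n * 2) := by
        rw [Finset.sum_const, Finset.card_erase_of_mem (mem_univ _), Finset.card_univ]
        simp [Fintype.card_fun]
lemma walsh_zero_left (a : Fin n → ZMod 2) :
    walshB n F 0 a = if a = 0 then 2 ^ n else 0 := by
  rw [walsh_expand]
  have h1 : ∀ x : Fin n → ZMod 2,
      chiZ (∑ i, (0 : Fin n → ZMod 2) i * F x i) * chiZ (∑ i, a i * x i)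
      = chiZ (∑ i, a i * x i) := by
    intro x
    have : (∑ i, (0 : Fin n → ZMod 2) i * F x i) = 0 := by simp
    rw [this]
    show chiZ 0 * _ = _
    rw [show chiZ 0 = 1 from rfl, one_mul]
  rw [Finset.sum_congr rfl fun x _ => h1 x, ortho' n a]
lemma three_mul_img (hne : Even n) : 3 * ((2 ^ n + 2) / 3) = 2 ^ n + 2 := by
  obtain ⟨m, rfl⟩ := hne
  apply Nat.mul_div_cancel'
  have h4 : (4 : ℕ) ^ m % 3 = 1 := by
    rw [Nat.pow_mod]
    simp
  have : 2 ^ (m + m) = 4 ^ m := by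
    rw [← two_mul, pow_mul]
    norm_num
  omega
lemma Nint_lb (hne : Even n)
    (himg : (univ.image F).card = (2 ^ n + 2) / 3) :
    3 * 2 ^ n - 4 ≤ ∑ x : Fin n → ZMod 2, ∑ y : Fin n → ZMod 2,
      (if F x = F y then (1 : ℤ) else 0) := by
  classical
  set m : (Fin n → ZMod 2) → ℕ := fun c => (univ.filter fun y => F y = c).card with hm
  have h1 : (∑ x : Fin n → ZMod 2, ∑ y : Fin n → ZMod 2,
      (if F x = F y then (1 : ℤ) else 0)) = ∑ x : Fin n → ZMod 2, (m (F x) : ℤ) := by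
    refine Finset.sum_congr rfl fun x _ => ?_
    have hsw : ∀ y : Fin n → ZMod 2,
        (if F x = F y then (1:ℤ) else 0) = if F y = F x then 1 else 0 := by
      intro y; by_cases h : F x = F y
      · rw [if_pos h, if_pos h.symm]
      · rw [if_neg h, if_neg fun hc => h hc.symm]
    rw [Finset.sum_congr rfl fun y _ => hsw y, Finset.sum_boole]
  have h2 : (∑ x : Fin n → ZMod 2, (m (F x) : ℤ))
      = ∑ c ∈ univ.image F, ((m c : ℤ)) ^ 2 := by
    rw [Finset.sum_comp (fun c => (m c : ℤ)) F]
    refine Finset.sum_congr rfl fun c _ => ?_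
    rw [sq, nsmul_eq_mul]
  have h3 : (∑ c ∈ univ.image F, (m c : ℤ)) = 2 ^ n := by
    have := Finset.card_eq_sum_card_fiberwise
      (f := F) (s := (univ : Finset (Fin n → ZMod 2))) (t := univ.image F)
      (fun x _ => Finset.mem_image_of_mem F (mem_univ x))
    have hcard : (univ : Finset (Fin n → ZMod 2)).card = 2 ^ n := by
      rw [Finset.card_univ]; simp [Fintype.card_fun]
    rw [hcard] at this
    have : ((2:ℕ) ^ n : ℤ) = ∑ c ∈ univ.image F, ((univ.filter fun x => F x = c).card : ℤ) := by
      exact_mod_cast congrArg (Nat.cast : ℕ → ℤ) this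
    rw [← this]
    push_cast
    ring
  have h4 : ∀ c ∈ univ.image F, 5 * (m c : ℤ) - 6 ≤ (m c : ℤ) ^ 2 := by
    intro c _
    rcases le_or_gt ((m c : ℤ)) 2 with h | h <;> nlinarith
  have h5 : (∑ c ∈ univ.image F, (5 * (m c : ℤ) - 6))
      ≤ ∑ c ∈ univ.image F, ((m c : ℤ)) ^ 2 := Finset.sum_le_sum h4
  rw [Finset.sum_sub_distrib, ← Finset.mul_sum, h3, Finset.sum_const, himg] at h5
  have h6 : ((3:ℤ)) * (((2 ^ n + 2) / 3 : ℕ) : ℤ) = 2 ^ n + 2 := by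
    have := three_mul_img (n := n) hne
    exact_mod_cast congrArg (Nat.cast : ℕ → ℤ) this
  rw [h1, h2]
  rw [nsmul_eq_mul] at h5
  nlinarith [h5, h6]
lemma plateau_sum4 {b : Fin n → ZMod 2} {t : ℕ} (h : IsTPlateauedB n F b t) :
    ∑ a : Fin n → ZMod 2, (walshB n F b a) ^ 4 = 2 ^ (n + t) * (2 ^ n * 2 ^ n) := by
  have h1 : ∀ a : Fin n → ZMod 2,
      (walshB n F b a) ^ 4 = 2 ^ (n + t) * (walshB n F b a) ^ 2 := by
    intro a
    rcases h a with h0 | h2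
    · rw [h0]; ring
    · rw [show (walshB n F b a) ^ 4 = ((walshB n F b a) ^ 2) ^ 2 by ring, h2, ← h2]
      ring
  rw [Finset.sum_congr rfl fun a _ => h1 a, ← Finset.mul_sum, parseval]
lemma t_ge_two (hn : 0 < n) (hne : Even n) {b : Fin n → ZMod 2} {t : ℕ}
    (h : IsTPlateauedB n F b t) (h0 : walshB n F b 0 = 0) : 2 ≤ t := by
  classical
  -- some a has nonzero W
  have hex : ∃ a : Fin n → ZMod 2, walshB n F b a ≠ 0 := by
    by_contra hc
    push_neg at hc
    have : (∑ a : Fin n → ZMod 2, (walshB n F b a) ^ 2) = 0 :=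
      Finset.sum_eq_zero fun a _ => by rw [hc a]; ring
    rw [parseval] at this
    have h2 : (0:ℤ) < 2 ^ n * 2 ^ n := by positivity
    omega
  obtain ⟨a, ha⟩ := hex
  have hsq : (walshB n F b a) ^ 2 = 2 ^ (n + t) := (h a).resolve_left ha
  -- n + t is even
  have heven : Even (n + t) := by
    set w : ℕ := (walshB n F b a).natAbs with hw
    have hw2 : (w : ℤ) ^ 2 = 2 ^ (n + t) := by
      calc ((w : ℤ)) ^ 2 = (walshB n F b a) ^ 2 := by
            rw [sq, sq, hw]; exact_mod_cast Int.natAbs_mul_self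
        _ = 2 ^ (n + t) := hsq
    have hwn : w ^ 2 = 2 ^ (n + t) := by exact_mod_cast hw2
    have hdvd : w ∣ 2 ^ (n + t) := by
      rw [← hwn]
      exact dvd_pow_self w (by norm_num)
    obtain ⟨j, hj, hjw⟩ := (Nat.dvd_prime_pow Nat.prime_two).mp hdvd
    have : 2 ^ (2 * j) = 2 ^ (n + t) := by
      rw [← hwn, hjw, ← pow_mul, mul_comm]
    have h2j : 2 * j = n + t := Nat.pow_right_injective (le_refl 2) this
    exact ⟨j, by omega⟩
  -- t ≠ 0
  have ht0 : t ≠ 0 := by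
    intro ht
    subst ht
    -- every W² ≤ 2^n, W(b,0)² = 0, contradict parseval
    have hb : ∀ a' : Fin n → ZMod 2, (walshB n F b a') ^ 2 ≤ 2 ^ n := by
      intro a'
      rcases h a' with h' | h'
      · rw [h']; positivity
      · rw [h', add_zero]
    have hsplit : (∑ a' : Fin n → ZMod 2, (walshB n F b a') ^ 2)
        = (walshB n F b 0) ^ 2 + ∑ a' ∈ univ.erase 0, (walshB n F b a') ^ 2 :=
      (Finset.add_sum_erase univ _ (mem_univ 0)).symm
    have hb2 : (∑ a' ∈ univ.erase (0 : Fin n → ZMod 2), (walshB n F b a') ^ 2)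
        ≤ (2 ^ n - 1) * 2 ^ n := by
      calc (∑ a' ∈ univ.erase (0 : Fin n → ZMod 2), (walshB n F b a') ^ 2)
          ≤ ∑ _a' ∈ univ.erase (0 : Fin n → ZMod 2), (2:ℤ) ^ n :=
            Finset.sum_le_sum fun a' _ => hb a'
        _ = (2 ^ n - 1) * 2 ^ n := by
            rw [Finset.sum_const, Finset.card_erase_of_mem (mem_univ _), Finset.card_univ]
            simp [Fintype.card_fun]
    rw [parseval, h0] at hsplit
    have hpos : (0:ℤ) < 2 ^ n := by positivity
    nlinarith [hsplit, hb2, hpos]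
  -- even n, even n+t ⇒ even t; t ≠ 0 ⇒ t ≥ 2
  obtain ⟨k, hk⟩ := hne
  obtain ⟨l, hl⟩ := heven
  omega

end

theorem plateaued_apn_min_image_no_balanced (n : ℕ) (hn : 0 < n) (hne : Even n)
    (F : (Fin n → ZMod 2) → (Fin n → ZMod 2))
    (hplat : IsPlateauedB n F) (hapn : IsAPNB n F)
    (himg : (univ.image F).card = (2 ^ n + 2) / 3) :
    ∀ b : Fin n → ZMod 2, b ≠ 0 → walshB n F b 0 ≠ 0 := by
  classical
  intro b0 hb0 hW0
  set P : ℤ := 2 ^ n with hP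
  have hPpos : (0:ℤ) < P := by positivity
  -- choose plateau parameters
  have hplat' : ∀ b : Fin n → ZMod 2, ∃ t : ℕ, b ≠ 0 → IsTPlateauedB n F b t := by
    intro b
    by_cases hb : b = 0
    · exact ⟨0, fun h => absurd hb h⟩
    · obtain ⟨t, ht⟩ := hplat b hb
      exact ⟨t, fun _ => ht⟩
  choose T hT using hplat'
  -- collision count
  set Nint : ℤ := ∑ x : Fin n → ZMod 2, ∑ y : Fin n → ZMod 2,
    (if F x = F y then (1 : ℤ) else 0) with hNint
  have hNlb : 3 * P - 4 ≤ Nint := Nint_lb hne himg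
  -- (A) fourth-moment bound
  have h4split : (∑ a : Fin n → ZMod 2, (walshB n F 0 a) ^ 4)
      + ∑ b ∈ univ.erase (0 : Fin n → ZMod 2), ∑ a : Fin n → ZMod 2, (walshB n F b a) ^ 4
      = ∑ b : Fin n → ZMod 2, ∑ a : Fin n → ZMod 2, (walshB n F b a) ^ 4 :=
    Finset.add_sum_erase univ (fun b => ∑ a : Fin n → ZMod 2, (walshB n F b a) ^ 4)
      (mem_univ (0 : Fin n → ZMod 2))
  have hW0sum : (∑ a : Fin n → ZMod 2, (walshB n F 0 a) ^ 4) = P ^ 4 := by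
    have h1 : ∀ a : Fin n → ZMod 2,
        (walshB n F 0 a) ^ 4 = if a = 0 then P ^ 4 else 0 := by
      intro a
      rw [walsh_zero_left]
      split_ifs
      · rfl
      · ring
    rw [Finset.sum_congr rfl fun a _ => h1 a, Finset.sum_ite_eq' univ 0 (fun _ => P ^ 4)]
    simp
  have hplate : ∀ b ∈ univ.erase (0 : Fin n → ZMod 2),
      (∑ a : Fin n → ZMod 2, (walshB n F b a) ^ 4) = 2 ^ (n + T b) * (P * P) :=
    fun b hb => plateau_sum4 (hT b (Finset.mem_erase.mp hb).1)
  have hquad : ∑ b : Fin n → ZMod 2, ∑ a : Fin n → ZMod 2, (walshB n F b a) ^ 4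
      ≤ P * P * (P * P + (P - 1) * (P * 2)) := by
    rw [L6eq]
    have := quadC_le (n := n) (F := F) hapn
    have hnn : (0:ℤ) ≤ P * P := by positivity
    calc 2 ^ n * 2 ^ n * quadC n F = P * P * quadC n F := by rw [hP]
      _ ≤ P * P * (P * P + (P - 1) * (P * 2)) := by
          apply mul_le_mul_of_nonneg_left _ hnn
          exact this
  have hsum4 : (∑ b ∈ univ.erase (0 : Fin n → ZMod 2), 2 ^ (n + T b)) * (P * P)
      ≤ (P - 1) * (P * 2) * (P * P) := by
    have h1 : (∑ b ∈ univ.erase (0 : Fin n → ZMod 2), 2 ^ (n + T b)) * (P * P)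
        = ∑ b ∈ univ.erase (0 : Fin n → ZMod 2), 2 ^ (n + T b) * (P * P) :=
      Finset.sum_mul _ _ _
    rw [h1, Finset.sum_congr rfl fun b hb => (hplate b hb).symm]
    have h2 := h4split
    rw [hW0sum] at h2
    nlinarith [hquad, h2]
  have hsum4' : (∑ b ∈ univ.erase (0 : Fin n → ZMod 2), (2:ℤ) ^ (n + T b))
      ≤ (P - 1) * (P * 2) :=
    le_of_mul_le_mul_right hsum4 (by positivity)
  -- (B) collision identity
  have hL4 : P ^ 2 + ∑ b ∈ univ.erase (0 : Fin n → ZMod 2), (walshB n F b 0) ^ 2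
      = P * Nint := by
    have h1 : (walshB n F 0 0) ^ 2
        + ∑ b ∈ univ.erase (0 : Fin n → ZMod 2), (walshB n F b 0) ^ 2
        = ∑ b : Fin n → ZMod 2, (walshB n F b 0) ^ 2 :=
      Finset.add_sum_erase univ (fun b => (walshB n F b 0) ^ 2)
        (mem_univ (0 : Fin n → ZMod 2))
    have h2 : (walshB n F 0 0) ^ 2 = P ^ 2 := by
      rw [walsh_zero_left, if_pos rfl]
    rw [h2] at h1
    rw [h1, L4, hNint, hP]
  -- (C) per-component bound on W(b,0)²
  have hb0mem : b0 ∈ univ.erase (0 : Fin n → ZMod 2) :=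
    Finset.mem_erase.mpr ⟨hb0, mem_univ _⟩
  have hT0 : 2 ≤ T b0 := t_ge_two hn hne (hT b0 hb0) hW0
  have hper : ∀ b ∈ univ.erase (0 : Fin n → ZMod 2),
      (walshB n F b 0) ^ 2 ≤ 2 ^ (n + T b) - (if b = b0 then 2 ^ (n + 2) else 0) := by
    intro b hb
    by_cases hbb : b = b0
    · subst hbb
      rw [if_pos rfl, hW0]
      have hle : (2:ℤ) ^ (n + 2) ≤ 2 ^ (n + T b) := by
        apply pow_le_pow_right₀ (by norm_num)
        omega
      nlinarith [hle]
    · rw [if_neg hbb, sub_zero]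
      rcases hT b (Finset.mem_erase.mp hb).1 0 with h | h
      · rw [h]; positivity
      · rw [h]
  have hsumper : (∑ b ∈ univ.erase (0 : Fin n → ZMod 2), (walshB n F b 0) ^ 2)
      ≤ (∑ b ∈ univ.erase (0 : Fin n → ZMod 2), (2:ℤ) ^ (n + T b)) - 2 ^ (n + 2) := by
    calc (∑ b ∈ univ.erase (0 : Fin n → ZMod 2), (walshB n F b 0) ^ 2)
        ≤ ∑ b ∈ univ.erase (0 : Fin n → ZMod 2),
            ((2:ℤ) ^ (n + T b) - (if b = b0 then 2 ^ (n + 2) else 0)) :=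
          Finset.sum_le_sum hper
      _ = (∑ b ∈ univ.erase (0 : Fin n → ZMod 2), (2:ℤ) ^ (n + T b))
          - ∑ b ∈ univ.erase (0 : Fin n → ZMod 2), (if b = b0 then (2:ℤ) ^ (n + 2) else 0) :=
          Finset.sum_sub_distrib _ _
      _ = (∑ b ∈ univ.erase (0 : Fin n → ZMod 2), (2:ℤ) ^ (n + T b)) - 2 ^ (n + 2) := by
          rw [Finset.sum_ite_eq' _ b0 (fun _ => (2:ℤ) ^ (n + 2)), if_pos hb0mem]
  -- assemble
  have hpow2 : (2:ℤ) ^ (n + 2) = 4 * P := by rw [pow_add, hP]; ring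
  have hfinal : P * Nint ≤ P * (3 * P - 6) := by
    have h1 : P * Nint ≤ P ^ 2 + ((P - 1) * (P * 2) - 4 * P) := by
      rw [← hL4]
      have := hsumper
      rw [hpow2] at this
      have h2 := le_trans this (by linarith [hsum4'] :
        (∑ b ∈ univ.erase (0 : Fin n → ZMod 2), (2:ℤ) ^ (n + T b)) - 4 * P
          ≤ (P - 1) * (P * 2) - 4 * P)
      linarith
    nlinarith [h1]
  have hNub : Nint ≤ 3 * P - 6 := le_of_mul_le_mul_left hfinal hPpos
  linarith
end
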